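/- arXiv:1305.2539 — 8 statements merged into one kernel-verified Lean document; each statement's English description precedes it below -/
import Mathlib

section
/- Let G = (V,E) be a finite connected k-regular graph of diameter exactly d, and suppose the adjacency matrix A of G has precisely d+1 distinct eigenvalues θ_0 > θ_1 > ... > θ_d (so θ_0 = k). Then for every pair of vertices x, y with ∂(x,y) = d and every i ∈ {1,...,d}, the (x,y)-entry of the spectral projection E_i equals -K_i/|V|, where K_i = ∏_{j∈{1,...,d}, j≠i} (θ_0 - θ_j)/(θ_i - θ_j). -/
/-- Product of `(A - c • 1)` over a list of reals kills entries of vertices at distance greater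
than the length of the list. -/
lemma listProd_sub_smul_apply_eq_zero {V : Type*} [Fintype V] [DecidableEq V]
    (G : SimpleGraph V) [DecidableRel G.Adj] (hconn : G.Connected) :
    ∀ (L : List ℝ) (u v : V), L.length < G.dist u v →
      ((L.map (fun c => G.adjMatrix ℝ - c • (1 : Matrix V V ℝ))).prod) u v = 0 := by
  intro L
  induction L with
  | nil =>
      intro u v h
      have huv : u ≠ v := by
        rintro rfl
        simp [SimpleGraph.dist_self] at h
      simp [Matrix.one_apply, huv]
  | cons a L ih =>
      intro u v h
      rw [List.map_cons, List.prod_cons, sub_mul, Matrix.sub_apply, Matrix.smul_mul,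
        Matrix.smul_apply, Matrix.one_mul]
      have h1 : ((L.map (fun c => G.adjMatrix ℝ - c • (1 : Matrix V V ℝ))).prod) u v = 0 := by
        apply ih
        simp only [List.length_cons] at h
        omega
      rw [h1, SimpleGraph.adjMatrix_mul_apply, smul_zero, sub_zero]
      apply Finset.sum_eq_zero
      intro w hw
      apply ih
      have hadj : G.Adj u w := (SimpleGraph.mem_neighborFinset _ _ _).mp hw
      have htri : G.dist u v ≤ G.dist u w + G.dist w v := hconn.dist_triangle
      have h1 : G.dist u w = 1 := SimpleGraph.dist_eq_one_iff_adj.mpr hadj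
      simp only [List.length_cons] at h
      omega

lemma listProd_sub_smul_mul_proj {V : Type*} [Fintype V] [DecidableEq V]
    (A : Matrix V V ℝ) (t : ℝ) (M : Matrix V V ℝ) (hAM : A * M = t • M) :
    ∀ (L : List ℝ),
      (L.map (fun c => A - c • (1 : Matrix V V ℝ))).prod * M
        = (L.map (fun c => t - c)).prod • M := by
  intro L
  induction L with
  | nil => simp
  | cons a L ih =>
      rw [List.map_cons, List.prod_cons, List.map_cons, List.prod_cons, mul_assoc, ih,
        Matrix.mul_smul, sub_mul, hAM, Matrix.smul_mul, Matrix.one_mul, ← sub_smul,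
        smul_smul, mul_comm]

/-- Let `G` be a finite connected `k`-regular graph of diameter exactly `d`,
whose adjacency matrix `A` has precisely `d+1` distinct eigenvalues
`θ 0 > θ 1 > ⋯ > θ d` (so `θ 0 = k`), with spectral projections `E 0, …, E d`.
Then for every pair of vertices `x, y` at distance `d` and every `i ∈ {1, …, d}`,
the `(x,y)`-entry of `E i` equals `-K i / |V|`, where
`K i = ∏_{j ∈ {1,…,d}, j ≠ i} (θ 0 - θ j) / (θ i - θ j)`. -/
theorem stmt_0 {V : Type*} [Fintype V] [DecidableEq V]
    (G : SimpleGraph V) [DecidableRel G.Adj] (k d : ℕ)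
    (hconn : G.Connected) (hreg : G.IsRegularOfDegree k)
    (hdiam : G.diam = d)
    (θ : Fin (d + 1) → ℝ) (hθ : StrictAnti θ) (hθ0 : θ 0 = (k : ℝ))
    (E : Fin (d + 1) → Matrix V V ℝ)
    (hsymm : ∀ i, (E i).IsSymm)
    (hidem : ∀ i, E i * E i = E i)
    (horth : ∀ i j, i ≠ j → E i * E j = 0)
    (hsum : ∑ i, E i = 1)
    (hAE : ∀ i, G.adjMatrix ℝ * E i = θ i • E i)
    (hne : ∀ i, E i ≠ 0) :
    ∀ x y : V, G.dist x y = d → ∀ i : Fin (d + 1), i ≠ 0 →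
      E i x y =
        -(∏ j ∈ Finset.univ.filter (fun j : Fin (d + 1) => j ≠ 0 ∧ j ≠ i),
            (θ 0 - θ j) / (θ i - θ j)) / (Fintype.card V : ℝ) := by
  intro x y hxy i hi
  classical
  have hV : Nonempty V := hconn.nonempty
  have hn0 : (Fintype.card V : ℝ) ≠ 0 := by
    exact_mod_cast Fintype.card_ne_zero
  -- First: every column of E 0 is constant (Perron-Frobenius type argument).
  have hcolconst : ∀ (b : V) (a a' : V), E 0 a b = E 0 a' b := by
    intro b
    set v : V → ℝ := fun a => E 0 a b with hv
    have heig : ∀ a, ∑ w ∈ G.neighborFinset a, v w = (k : ℝ) * v a := by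
      intro a
      have := congrFun (congrFun (hAE 0) a) b
      rw [SimpleGraph.adjMatrix_mul_apply] at this
      simpa [hθ0] using this
    obtain ⟨a0, -, hmax⟩ := Finset.exists_max_image Finset.univ v Finset.univ_nonempty
    have hstep : ∀ a w, G.Adj a w → v a = v a0 → v w = v a0 := by
      intro a w hadj hva
      have hcard : (G.neighborFinset a).card = k := hreg a
      have hsum' : ∑ w ∈ G.neighborFinset a, v w = ∑ _w ∈ G.neighborFinset a, v a0 := by
        rw [heig a, hva, Finset.sum_const, hcard, nsmul_eq_mul]
      have hle : ∀ w ∈ G.neighborFinset a, v w ≤ v a0 := fun w _ =>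
        hmax w (Finset.mem_univ w)
      have := (Finset.sum_eq_sum_iff_of_le hle).mp hsum'
      exact this w ((SimpleGraph.mem_neighborFinset _ _ _).mpr hadj)
    have haux : ∀ {a t : V} (_ : G.Walk a t), v a = v a0 → v t = v a0 := by
      intro a t p
      induction p with
      | nil => exact fun h => h
      | cons h q ih => exact fun hva => ih (hstep _ _ h hva)
    intro a a'
    have h1 := haux ((hconn.preconnected a0 a).some) rfl
    have h2 := haux ((hconn.preconnected a0 a').some) rfl
    show v a = v a'
    rw [h1, h2]
  -- hence all entries of E 0 are equal
  have hallE0 : ∀ a b, E 0 a b = E 0 x y := by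
    have hsym0 : ∀ a b, E 0 a b = E 0 b a := by
      intro a b
      have := congrFun (congrFun (hsymm 0) b) a
      simpa [Matrix.transpose_apply] using this
    intro a b
    calc E 0 a b = E 0 x b := hcolconst b a x
      _ = E 0 b x := hsym0 x b
      _ = E 0 y x := hcolconst x b y
      _ = E 0 x y := hsym0 y x
  -- and E 0 x y = 1 / card V
  have hE0 : E 0 x y = 1 / (Fintype.card V : ℝ) := by
    have hidem0 := congrFun (congrFun (hidem 0) x) y
    rw [Matrix.mul_apply] at hidem0
    have hsum2 : ∑ w : V, E 0 x w * E 0 w y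
        = (Fintype.card V : ℝ) * (E 0 x y * E 0 x y) := by
      rw [Finset.sum_congr rfl (fun w _ => by rw [hallE0 x w, hallE0 w y]),
        Finset.sum_const, nsmul_eq_mul, Finset.card_univ]
    rw [hsum2] at hidem0
    have hcne : E 0 x y ≠ 0 := by
      intro h0
      apply hne 0
      ext a b
      rw [hallE0 a b, h0, Matrix.zero_apply]
    have hfac : E 0 x y * ((Fintype.card V : ℝ) * E 0 x y - 1) = 0 := by
      nlinarith [hidem0]
    rcases mul_eq_zero.mp hfac with h | h
    · exact absurd h hcne
    · field_simp
      linarith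
  -- the key finset
  set S : Finset (Fin (d + 1)) :=
    Finset.univ.filter (fun j : Fin (d + 1) => j ≠ 0 ∧ j ≠ i) with hS
  have hd1 : 1 ≤ d := by
    rcases Nat.eq_zero_or_pos d with h | h
    · exfalso
      subst h
      have := i.isLt
      exact hi (Fin.ext (by omega))
    · exact h
  have hScard : S.card = d - 1 := by
    have h1 : S = Finset.univ \ {0, i} := by
      ext j; simp [hS, and_comm]
    rw [h1, Finset.card_sdiff_of_subset (Finset.subset_univ _), Finset.card_univ]
    rw [Finset.card_insert_of_notMem (by simpa using (Ne.symm hi)), Finset.card_singleton]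
    simp
  -- the key list of eigenvalues
  set L : List ℝ := S.toList.map θ with hL
  have hLlen : L.length = d - 1 := by
    rw [hL, List.length_map, Finset.length_toList, hScard]
  have hLprod : ∀ t : ℝ, (L.map (fun c => t - c)).prod = ∏ j ∈ S, (t - θ j) := by
    intro t
    rw [hL, List.map_map]
    exact Finset.prod_map_toList S (fun j => t - θ j)
  -- entry of the product vanishes since deg < dist
  have hQ0 : ((L.map (fun c => G.adjMatrix ℝ - c • (1 : Matrix V V ℝ))).prod) x y = 0 := by
    apply listProd_sub_smul_apply_eq_zero G hconn
    rw [hLlen, hxy]; omega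
  -- expand product against spectral decomposition
  have hQx : ((L.map (fun c => G.adjMatrix ℝ - c • (1 : Matrix V V ℝ))).prod) x y
      = ∑ m : Fin (d + 1), (∏ j ∈ S, (θ m - θ j)) * E m x y := by
    have h1 : (L.map (fun c => G.adjMatrix ℝ - c • (1 : Matrix V V ℝ))).prod
        = ∑ m : Fin (d + 1), (∏ j ∈ S, (θ m - θ j)) • E m := by
      calc (L.map (fun c => G.adjMatrix ℝ - c • (1 : Matrix V V ℝ))).prod
          = (L.map (fun c => G.adjMatrix ℝ - c • (1 : Matrix V V ℝ))).prod * (∑ m, E m) := by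
            rw [hsum, mul_one]
        _ = ∑ m, (L.map (fun c => G.adjMatrix ℝ - c • (1 : Matrix V V ℝ))).prod * E m := by
            rw [Finset.mul_sum]
        _ = ∑ m : Fin (d + 1), (∏ j ∈ S, (θ m - θ j)) • E m := by
            refine Finset.sum_congr rfl fun m _ => ?_
            rw [listProd_sub_smul_mul_proj _ _ _ (hAE m) L, hLprod]
    rw [h1]
    simp [Matrix.sum_apply]
  -- conclude the linear relation between E 0 and E i entries
  have hkey : 0 = (∏ j ∈ S, (θ 0 - θ j)) * E 0 x y
      + (∏ j ∈ S, (θ i - θ j)) * E i x y := by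
    have hsplit := Finset.sum_filter_add_sum_filter_not Finset.univ
      (fun j : Fin (d + 1) => j ≠ 0 ∧ j ≠ i)
      (fun m => (∏ j ∈ S, (θ m - θ j)) * E m x y)
    have hzero : ∑ m ∈ S, (∏ j ∈ S, (θ m - θ j)) * E m x y = 0 := by
      refine Finset.sum_eq_zero fun m hm => ?_
      exact mul_eq_zero_of_left (Finset.prod_eq_zero (f := fun j => θ m - θ j) hm (by ring)) _
    have hcompl : Finset.univ.filter (fun j : Fin (d + 1) => ¬(j ≠ 0 ∧ j ≠ i))
        = {0, i} := by
      ext j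
      simp only [Finset.mem_filter, Finset.mem_univ, true_and, not_and_or, not_not,
        Finset.mem_insert, Finset.mem_singleton]
    rw [← hS, hzero, hcompl, Finset.sum_pair (Ne.symm hi), zero_add] at hsplit
    rw [hsplit, ← hQx, hQ0]
  -- θ i - θ j ≠ 0 for j ∈ S
  have hci : (∏ j ∈ S, (θ i - θ j)) ≠ 0 := by
    apply Finset.prod_ne_zero_iff.mpr
    intro j hj
    have hji : j ≠ i := (Finset.mem_filter.mp hj).2.2
    exact sub_ne_zero_of_ne (fun h => hji (hθ.injective h.symm))
  rw [hE0] at hkey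
  rw [Finset.prod_div_distrib]
  field_simp at hkey ⊢
  linarith
end

section
/- Let G = (V,E) be a finite connected k-regular graph (with k ≥ 2) whose adjacency matrix has at most d+1 distinct eigenvalues, and suppose |V| > M(k,d-1) = 1 + k·∑_{j=0}^{d-2}(k-1)^j. Write the (necessarily exactly d+1) distinct eigenvalues as θ_0 > θ_1 > ... > θ_d. Then for every pair of vertices x, y with ∂(x,y) = d and every i ∈ {1,...,d}, the (x,y)-entry of the spectral projection E_i equals -K_i/|V|, where K_i = ∏_{j∈{1,...,d}, j≠i} (θ_0 - θ_j)/(θ_i - θ_j). -/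
open Finset Matrix Polynomial

private lemma aux_pow {V : Type*} [Fintype V] [DecidableEq V]
    (A B : Matrix V V ℝ) (t : ℝ) (h : A * B = t • B) (n : ℕ) :
    A ^ n * B = t ^ n • B := by
  induction n with
  | zero => simp
  | succ n ih =>
    rw [pow_succ, mul_assoc, h, mul_smul_comm, ih, smul_smul, pow_succ, mul_comm]

private lemma aux_aeval {V : Type*} [Fintype V] [DecidableEq V]
    (A B : Matrix V V ℝ) (t : ℝ) (h : A * B = t • B) (q : ℝ[X]) :
    (aeval A q) * B = q.eval t • B := by
  induction q using Polynomial.induction_on' with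
  | add p q hp hq => rw [map_add, add_mul, hp, hq, eval_add, add_smul]
  | monomial n a =>
    rw [aeval_monomial, eval_monomial, mul_assoc, aux_pow A B t h n,
      Algebra.algebraMap_eq_smul_one, smul_mul_assoc, one_mul, smul_smul]

private lemma aux_eigen_le {V : Type*} [Fintype V] [DecidableEq V]
    (G : SimpleGraph V) [DecidableRel G.Adj] {k : ℕ} (hreg : G.IsRegularOfDegree k)
    {v : V → ℝ} (hv : v ≠ 0) {t : ℝ} (h : G.adjMatrix ℝ *ᵥ v = t • v) : |t| ≤ k := by
  have hne : (Finset.univ : Finset V).Nonempty := by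
    rcases Function.ne_iff.mp hv with ⟨a, _⟩
    exact ⟨a, Finset.mem_univ a⟩
  obtain ⟨x0, -, hx0⟩ := Finset.exists_max_image Finset.univ (fun z => |v z|) hne
  have hx0pos : 0 < |v x0| := by
    rcases Function.ne_iff.mp hv with ⟨a, ha⟩
    exact lt_of_lt_of_le (abs_pos.mpr ha) (hx0 a (Finset.mem_univ a))
  have key : |t| * |v x0| ≤ (k : ℝ) * |v x0| := by
    have h1 : t * v x0 = ∑ u ∈ G.neighborFinset x0, v u := by
      have := congrFun h x0
      rw [SimpleGraph.adjMatrix_mulVec_apply] at this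
      rw [this]; simp
    calc |t| * |v x0| = |∑ u ∈ G.neighborFinset x0, v u| := by rw [← abs_mul, h1]
      _ ≤ ∑ u ∈ G.neighborFinset x0, |v u| := Finset.abs_sum_le_sum_abs _ _
      _ ≤ ∑ _u ∈ G.neighborFinset x0, |v x0| :=
          Finset.sum_le_sum (fun u _ => hx0 u (Finset.mem_univ u))
      _ = (k : ℝ) * |v x0| := by
          rw [Finset.sum_const, ← SimpleGraph.degree, hreg x0, nsmul_eq_mul]
  exact le_of_mul_le_mul_right key hx0pos

private lemma aux_const {V : Type*} [Fintype V] [DecidableEq V]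
    (G : SimpleGraph V) [DecidableRel G.Adj] {k : ℕ} (hconn : G.Connected)
    (hreg : G.IsRegularOfDegree k)
    {v : V → ℝ} (h : G.adjMatrix ℝ *ᵥ v = (k : ℝ) • v) : ∀ a b : V, v a = v b := by
  have hlap : Matrix.toLin' (G.lapMatrix ℝ) v = 0 := by
    rw [Matrix.toLin'_apply]
    ext a
    rw [SimpleGraph.lapMatrix_mulVec_apply, hreg a]
    have h1 : (k : ℝ) * v a = ∑ u ∈ G.neighborFinset a, v u := by
      have := congrFun h a
      rw [SimpleGraph.adjMatrix_mulVec_apply] at this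
      rw [this]; simp
    rw [← h1]; simp
  have hadj := (G.lapMatrix_mulVec_eq_zero_iff_forall_adj (x := v)).mp hlap
  intro a b
  obtain ⟨w⟩ := hconn.preconnected a b
  induction w with
  | nil => rfl
  | cons hadj' _ ih => exact (hadj _ _ hadj').trans ih

private lemma aux_sum_mulVec {V ι : Type*} [Fintype V] [DecidableEq V]
    (s : Finset ι) (M : ι → Matrix V V ℝ) (v : V → ℝ) :
    (∑ m ∈ s, M m) *ᵥ v = ∑ m ∈ s, (M m) *ᵥ v := by
  induction s using Finset.cons_induction with
  | empty => simp [Matrix.zero_mulVec]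
  | cons a s ha ih => simp [Finset.sum_cons, Matrix.add_mulVec, ih]

/-- Let `G` be a finite connected `k`-regular graph (`k ≥ 2`) with at most
`d+1` distinct adjacency eigenvalues and `|V| > M(k, d-1) = 1 + k * ∑_{j=0}^{d-2} (k-1)^j`.
Writing the (necessarily exactly `d+1`) distinct eigenvalues as `θ 0 > θ 1 > ⋯ > θ d`,
with spectral projections `E 0, …, E d`, for every pair of vertices `x, y` at distance `d`
and every `i ∈ {1, …, d}`, the `(x,y)`-entry of `E i` equals `-K i / |V|`, where
`K i = ∏_{j ∈ {1,…,d}, j ≠ i} (θ 0 - θ j) / (θ i - θ j)`. -/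
theorem stmt_3 {V : Type*} [Fintype V] [DecidableEq V]
    (G : SimpleGraph V) [DecidableRel G.Adj] (k d : ℕ) (hk : 2 ≤ k)
    (hconn : G.Connected) (hreg : G.IsRegularOfDegree k)
    (hspec : (spectrum ℝ (G.adjMatrix ℝ)).ncard ≤ d + 1)
    (hcard : Fintype.card V > 1 + k * ∑ j ∈ Finset.range (d - 1), (k - 1) ^ j)
    (θ : Fin (d + 1) → ℝ) (hθ : StrictAnti θ)
    (E : Fin (d + 1) → Matrix V V ℝ)
    (hsymm : ∀ i, (E i).IsSymm)
    (hidem : ∀ i, E i * E i = E i)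
    (horth : ∀ i j, i ≠ j → E i * E j = 0)
    (hsum : ∑ i, E i = 1)
    (hAE : ∀ i, G.adjMatrix ℝ * E i = θ i • E i)
    (hne : ∀ i, E i ≠ 0) :
    ∀ x y : V, G.dist x y = d → ∀ i : Fin (d + 1), i ≠ 0 →
      E i x y =
        -(∏ j ∈ Finset.univ.filter (fun j : Fin (d + 1) => j ≠ 0 ∧ j ≠ i),
            (θ 0 - θ j) / (θ i - θ j)) / (Fintype.card V : ℝ) := by
  intro x y hxy i hi0
  set A := G.adjMatrix ℝ with hA
  have hn0 : 0 < Fintype.card V := lt_of_le_of_lt (Nat.zero_le _) hcard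
  have hNV : Nonempty V := Fintype.card_pos_iff.mp hn0
  have hnne : (Fintype.card V : ℝ) ≠ 0 := Nat.cast_ne_zero.mpr hn0.ne'
  -- columns of E m are eigenvectors
  have hcol : ∀ (m : Fin (d + 1)) (b : V),
      A *ᵥ (fun z => E m z b) = θ m • (fun z => E m z b) := by
    intro m b
    funext z
    have h1 : (A *ᵥ fun z => E m z b) z = (A * E m) z b := by
      rw [Matrix.mul_apply]; rfl
    rw [h1, hAE m]; rfl
  -- E m * A = θ m • E m
  have hEA : ∀ m, E m * A = θ m • E m := by
    intro m
    have := congrArg Matrix.transpose (hAE m)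
    rwa [Matrix.transpose_mul, (hsymm m).eq, Matrix.transpose_smul, (hsymm m).eq,
      (SimpleGraph.isSymm_adjMatrix G).eq] at this
  -- A applied to all-ones vector
  have hones : A *ᵥ (fun _ => (1 : ℝ)) = (k : ℝ) • (fun _ => (1 : ℝ)) := by
    funext z
    rw [SimpleGraph.adjMatrix_mulVec_apply]
    rw [Finset.sum_const, nsmul_eq_mul, mul_one, ← SimpleGraph.degree, hreg z]
    simp
  -- some eigenvalue equals k
  have hexk : ∃ m : Fin (d + 1), θ m = (k : ℝ) := by
    by_contra hcon
    push_neg at hcon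
    have hv0 : ∀ m : Fin (d + 1), E m *ᵥ (fun _ => (1 : ℝ)) = 0 := by
      intro m
      have h1 : (E m * A) *ᵥ (fun _ => (1 : ℝ)) = θ m • (E m *ᵥ fun _ => (1 : ℝ)) := by
        rw [hEA m, Matrix.smul_mulVec]
      have h2 : (E m * A) *ᵥ (fun _ => (1 : ℝ)) = (k : ℝ) • (E m *ᵥ fun _ => (1 : ℝ)) := by
        rw [← Matrix.mulVec_mulVec, hones, Matrix.mulVec_smul]
      have h3 : (θ m - (k : ℝ)) • (E m *ᵥ fun _ => (1 : ℝ)) = 0 := by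
        rw [sub_smul, h1.symm.trans h2]; simp
      have := smul_eq_zero.mp h3
      rcases this with h | h
      · exact absurd (by linarith [sub_eq_zero.mp h] : θ m = (k : ℝ)) (hcon m)
      · exact h
    have hsum1 : (fun _ => (1 : ℝ)) = ∑ m, E m *ᵥ (fun _ => (1 : ℝ)) := by
      rw [← aux_sum_mulVec, hsum, Matrix.one_mulVec]
    obtain ⟨z⟩ := hNV
    have := congrFun hsum1 z
    simp only [Finset.sum_apply, hv0] at this
    simp at this
  -- θ 0 = k
  have hθ0 : θ 0 = (k : ℝ) := by
    obtain ⟨a0, b0, hab⟩ : ∃ a b, E 0 a b ≠ 0 := by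
      by_contra hc
      push_neg at hc
      exact hne 0 (by ext a b; exact hc a b)
    have hcolne : (fun z => E 0 z b0) ≠ 0 := by
      intro hz
      exact hab (congrFun hz a0)
    have hle : |θ 0| ≤ (k : ℝ) := aux_eigen_le G hreg hcolne (hcol 0 b0)
    obtain ⟨m, hm⟩ := hexk
    have hmle : θ m ≤ θ 0 := hθ.antitone (Fin.zero_le m)
    have := le_trans (le_abs_self (θ 0)) hle
    linarith [hm ▸ hmle]
  -- E 0 is constant
  have hconst : ∀ a b c e : V, E 0 a b = E 0 c e := by
    have hcc : ∀ b a c : V, E 0 a b = E 0 c b := by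
      intro b a c
      exact aux_const G hconn hreg (hθ0 ▸ hcol 0 b) a c
    intro a b c e
    calc E 0 a b = E 0 e b := hcc b a e
      _ = E 0 b e := (hsymm 0).apply b e
      _ = E 0 c e := hcc e b c
  have hE0 : E 0 x y = (Fintype.card V : ℝ)⁻¹ := by
    set c := E 0 x y with hc
    have hEc : ∀ a b, E 0 a b = c := fun a b => hconst a b x y
    have hsq : (Fintype.card V : ℝ) * (c * c) = c := by
      have h1 := congrFun (congrFun (hidem 0) x) y
      rw [Matrix.mul_apply] at h1
      simp only [hEc] at h1
      rw [Finset.sum_const, nsmul_eq_mul, Finset.card_univ] at h1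
      exact h1
    have hc0 : c ≠ 0 := by
      intro h
      exact hne 0 (by ext a b; rw [hEc a b, h]; rfl)
    have h2 : c * ((Fintype.card V : ℝ) * c) = c * 1 := by
      rw [mul_one]; linear_combination hsq
    exact eq_inv_of_mul_eq_one_right (mul_left_cancel₀ hc0 h2)
  -- d ≥ 1
  have hd1 : 1 ≤ d := by
    rcases Nat.eq_zero_or_pos d with h0 | h
    · subst h0; exact absurd (Fin.ext (by have := i.isLt; omega)) hi0
    · exact h
  -- the polynomial
  set S : Finset (Fin (d + 1)) := Finset.univ.filter (fun j => j ≠ 0 ∧ j ≠ i) with hS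
  have hSdiff : S = Finset.univ \ {0, i} := by
    ext j
    simp [hS]
  have hScard : S.card = d - 1 := by
    have h2 : ({0, i} : Finset (Fin (d + 1))).card = 2 := by
      rw [Finset.card_insert_of_notMem (by simpa using Ne.symm hi0), Finset.card_singleton]
    rw [hSdiff, Finset.card_sdiff_of_subset (Finset.subset_univ _), Finset.card_univ, Fintype.card_fin, h2]
    omega
  set p : Polynomial ℝ := ∏ j ∈ S, (Polynomial.X - Polynomial.C (θ j)) with hp
  have hdeg : p.natDegree = d - 1 := by
    rw [hp, Polynomial.natDegree_prod _ _ (fun j _ => Polynomial.X_sub_C_ne_zero (θ j))]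
    simp [Polynomial.natDegree_X_sub_C, hScard]
  -- entry vanishing
  have hApow : ∀ n, n < d → (A ^ n) x y = 0 := by
    intro n hn
    rw [hA, SimpleGraph.adjMatrix_pow_apply_eq_card_walk]
    have hEmpty : IsEmpty { q : G.Walk x y | q.length = n } := by
      constructor
      rintro ⟨w, hw⟩
      have h1 : G.dist x y ≤ w.length := SimpleGraph.dist_le w
      simp only [Set.mem_setOf_eq] at hw
      omega
    rw [Fintype.card_eq_zero]
    norm_num
  have hzero : (Polynomial.aeval A p) x y = 0 := by
    rw [Polynomial.aeval_eq_sum_range]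
    rw [Matrix.sum_apply]
    apply Finset.sum_eq_zero
    intro n hn
    rw [Finset.mem_range, hdeg] at hn
    rw [Matrix.smul_apply, hApow n (by omega), smul_zero]
  -- decompose aeval A p
  have hPA : Polynomial.aeval A p = p.eval (θ 0) • E 0 + p.eval (θ i) • E i := by
    have h1 : Polynomial.aeval A p = ∑ m, p.eval (θ m) • E m := by
      calc Polynomial.aeval A p = Polynomial.aeval A p * ∑ m, E m := by rw [hsum, mul_one]
        _ = ∑ m, Polynomial.aeval A p * E m := Finset.mul_sum _ _ _
        _ = ∑ m, p.eval (θ m) • E m :=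
            Finset.sum_congr rfl fun m _ => aux_aeval A (E m) (θ m) (hAE m) p
    have h2 : ∀ m ∈ S, p.eval (θ m) = 0 := by
      intro m hm
      rw [hp, Polynomial.eval_prod]
      exact Finset.prod_eq_zero hm (by simp)
    have h3 : ∑ m, p.eval (θ m) • E m = ∑ m ∈ ({0, i} : Finset (Fin (d + 1))),
        p.eval (θ m) • E m := by
      symm
      apply Finset.sum_subset (Finset.subset_univ _)
      intro m _ hm
      have hmS : m ∈ S := by rw [hSdiff]; simp [hm]
      rw [h2 m hmS, zero_smul]
    rw [h1, h3, Finset.sum_pair (Ne.symm hi0)]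
  -- evaluate at (x, y)
  have hfin : 0 = p.eval (θ 0) * E 0 x y + p.eval (θ i) * E i x y := by
    have := congrFun (congrFun hPA x) y
    rw [hzero] at this
    simpa [Matrix.add_apply, Matrix.smul_apply] using this
  have heval0 : p.eval (θ 0) = ∏ j ∈ S, (θ 0 - θ j) := by
    rw [hp, Polynomial.eval_prod]; simp
  have hevali : p.eval (θ i) = ∏ j ∈ S, (θ i - θ j) := by
    rw [hp, Polynomial.eval_prod]; simp
  have hine : (∏ j ∈ S, (θ i - θ j)) ≠ 0 := by
    apply Finset.prod_ne_zero_iff.mpr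
    intro j hj
    rw [hS, Finset.mem_filter] at hj
    exact sub_ne_zero.mpr fun h => hj.2.2 (hθ.injective h).symm
  have hprod : ∏ j ∈ S, (θ 0 - θ j) / (θ i - θ j) =
      (∏ j ∈ S, (θ 0 - θ j)) / (∏ j ∈ S, (θ i - θ j)) := Finset.prod_div_distrib _ _
  rw [hE0, heval0, hevali] at hfin
  rw [hprod, ← neg_div, div_div,
    eq_div_iff (mul_ne_zero hine hnne)]
  have h5 : (∏ j ∈ S, (θ i - θ j)) * E i x y =
      -((∏ j ∈ S, (θ 0 - θ j)) * (Fintype.card V : ℝ)⁻¹) := by linarith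
  calc E i x y * ((∏ j ∈ S, (θ i - θ j)) * (Fintype.card V : ℝ))
      = ((∏ j ∈ S, (θ i - θ j)) * E i x y) * (Fintype.card V : ℝ) := by ring
    _ = -((∏ j ∈ S, (θ 0 - θ j)) * (Fintype.card V : ℝ)⁻¹) * (Fintype.card V : ℝ) := by
        rw [h5]
    _ = -(∏ j ∈ S, (θ 0 - θ j)) * ((Fintype.card V : ℝ)⁻¹ * (Fintype.card V : ℝ)) := by ring
    _ = -(∏ j ∈ S, (θ 0 - θ j)) := by rw [inv_mul_cancel₀ hnne, mul_one]
end

section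
/- Let G = (V,E) be a finite connected k-regular graph (with k ≥ 2) whose adjacency matrix has at most d+1 distinct eigenvalues, and suppose |V| > M(k,d-1) = 1 + k·∑_{j=0}^{d-2}(k-1)^j. Write the distinct eigenvalues as θ_0 > θ_1 > ... > θ_d. Then for each vertex x and each i ∈ {1,...,d}, the number of vertices y such that the (x,y)-entry of the spectral projection E_i equals -K_i/|V| is at least |V| - M(k,d-1), where K_i = ∏_{j∈{1,...,d}, j≠i} (θ_0 - θ_j)/(θ_i - θ_j). -/
open Finset Matrix Polynomial

section AuxMoore
variable {V : Type*} [Fintype V] [DecidableEq V] (G : SimpleGraph V) [DecidableRel G.Adj]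

omit [Fintype V] [DecidableEq V] [DecidableRel G.Adj] in
lemma aux_exists_neighbor (hconn : G.Connected) (x z : V) (j : ℕ)
    (hz : G.dist x z = j + 1) : ∃ w, G.Adj w z ∧ G.dist x w = j := by
  have hr : G.Reachable z x := (hconn z x)
  obtain ⟨q, hq⟩ := hr.exists_walk_length_eq_dist
  rw [SimpleGraph.dist_comm, hz] at hq
  cases q with
  | nil => simp at hq
  | @cons _ w _ h q' =>
    simp only [SimpleGraph.Walk.length_cons, Nat.add_right_cancel_iff] at hq
    refine ⟨w, h.symm, le_antisymm ?_ ?_⟩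
    · calc G.dist x w ≤ q'.reverse.length := G.dist_le _
        _ = j := by rw [SimpleGraph.Walk.length_reverse, hq]
    · have ht : G.dist x z ≤ G.dist x w + G.dist w z := hconn.dist_triangle
      have : G.dist w z = 1 := SimpleGraph.dist_eq_one_iff_adj.mpr h.symm
      omega

lemma aux_sphere (hconn : G.Connected) {k : ℕ} (hreg : G.IsRegularOfDegree k) (x : V) :
    ∀ j : ℕ, (univ.filter (fun y => G.dist x y = j + 1)).card ≤ k * (k - 1) ^ j := by
  intro j
  induction j with
  | zero =>
    simp only [pow_zero, mul_one]
    have hsub : (univ.filter (fun y => G.dist x y = 1)) ⊆ G.neighborFinset x := by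
      intro y hy
      simp only [mem_filter] at hy
      rw [SimpleGraph.mem_neighborFinset]
      exact SimpleGraph.dist_eq_one_iff_adj.mp hy.2
    calc _ ≤ (G.neighborFinset x).card := card_le_card hsub
      _ = k := by rw [SimpleGraph.card_neighborFinset_eq_degree, hreg x]
  | succ j ih =>
    have hsub : (univ.filter (fun y => G.dist x y = j + 2)) ⊆
        (univ.filter (fun y => G.dist x y = j + 1)).biUnion
          (fun z => G.neighborFinset z ∩ univ.filter (fun y => G.dist x y = j + 2)) := by
      intro y hy
      simp only [mem_filter] at hy
      obtain ⟨w, hw, hwd⟩ := aux_exists_neighbor G hconn x y (j + 1) hy.2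
      refine mem_biUnion.mpr ⟨w, by simp [hwd], ?_⟩
      simp only [mem_inter, SimpleGraph.mem_neighborFinset, mem_filter]
      exact ⟨hw, by simp [hy.2]⟩
    calc (univ.filter (fun y => G.dist x y = j + 2)).card
        ≤ _ := card_le_card hsub
      _ ≤ ∑ z ∈ univ.filter (fun y => G.dist x y = j + 1),
            (G.neighborFinset z ∩ univ.filter (fun y => G.dist x y = j + 2)).card :=
          card_biUnion_le
      _ ≤ ∑ z ∈ univ.filter (fun y => G.dist x y = j + 1), (k - 1) := by
          refine sum_le_sum fun z hz => ?_
          simp only [mem_filter] at hz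
          obtain ⟨w, hw, hwd⟩ := aux_exists_neighbor G hconn x z j hz.2
          have hsub2 : G.neighborFinset z ∩ univ.filter (fun y => G.dist x y = j + 2) ⊆
              G.neighborFinset z \ {w} := by
            intro y hy
            simp only [mem_inter, mem_filter, SimpleGraph.mem_neighborFinset] at hy
            simp only [mem_sdiff, mem_singleton, SimpleGraph.mem_neighborFinset]
            refine ⟨hy.1, ?_⟩
            rintro rfl
            omega
          calc _ ≤ (G.neighborFinset z \ {w}).card := card_le_card hsub2
            _ = (G.neighborFinset z).card - 1 := by
                rw [card_sdiff_of_subset (by simp [SimpleGraph.mem_neighborFinset, hw.symm])]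
                simp
            _ = k - 1 := by rw [SimpleGraph.card_neighborFinset_eq_degree, hreg z]
      _ = (univ.filter (fun y => G.dist x y = j + 1)).card * (k - 1) := by
          rw [sum_const, smul_eq_mul]
      _ ≤ k * (k - 1) ^ j * (k - 1) := Nat.mul_le_mul_right _ ih
      _ = k * (k - 1) ^ (j + 1) := by ring

lemma aux_ball (hconn : G.Connected) {k : ℕ} (hreg : G.IsRegularOfDegree k) (x : V) (r : ℕ) :
    (univ.filter (fun y => G.dist x y ≤ r)).card ≤ 1 + k * ∑ j ∈ range r, (k - 1) ^ j := by
  induction r with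
  | zero =>
    have : (univ.filter (fun y => G.dist x y ≤ 0)) ⊆ {x} := by
      intro y hy
      simp only [mem_filter, Nat.le_zero] at hy
      simp [((hconn.dist_eq_zero_iff).mp hy.2).symm]
    simpa using card_le_card this
  | succ r ih =>
    have hsub : (univ.filter (fun y => G.dist x y ≤ r + 1)) ⊆
        (univ.filter (fun y => G.dist x y ≤ r)) ∪ (univ.filter (fun y => G.dist x y = r + 1)) := by
      intro y hy
      simp only [mem_filter] at hy
      simp only [mem_union, mem_filter, mem_univ, true_and]
      omega
    calc (univ.filter (fun y => G.dist x y ≤ r + 1)).card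
        ≤ _ := card_le_card hsub
      _ ≤ _ + _ := card_union_le _ _
      _ ≤ (1 + k * ∑ j ∈ range r, (k - 1) ^ j) + k * (k - 1) ^ r :=
          Nat.add_le_add ih (aux_sphere G hconn hreg x r)
      _ = 1 + k * ∑ j ∈ range (r + 1), (k - 1) ^ j := by
          rw [sum_range_succ]; ring

lemma aux_pow_entry (n : ℕ) (x y : V) (h : n < G.dist x y) :
    ((G.adjMatrix ℝ) ^ n) x y = 0 := by
  rw [SimpleGraph.adjMatrix_pow_apply_eq_card_walk]
  have : IsEmpty ↑{p : G.Walk x y | p.length = n} := by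
    constructor
    rintro ⟨p, hp⟩
    simp only [Set.mem_setOf_eq] at hp
    have := G.dist_le p
    omega
  simp only [Nat.cast_eq_zero]
  exact Fintype.card_eq_zero

omit [DecidableEq V] in
lemma aux_eig_le {k : ℕ} (hreg : G.IsRegularOfDegree k) [Nonempty V]
    (lam : ℝ) (v : V → ℝ) (hv : v ≠ 0) (h : G.adjMatrix ℝ *ᵥ v = lam • v) : lam ≤ k := by
  obtain ⟨a, -, ha⟩ := Finset.exists_max_image Finset.univ (fun z => |v z|) univ_nonempty
  have hva : 0 < |v a| := by
    rcases lt_or_eq_of_le (abs_nonneg (v a)) with h' | h'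
    · exact h'
    · exfalso; apply hv; funext z
      have h1 := ha z (mem_univ z)
      have h2 : |v z| = 0 := le_antisymm (h' ▸ h1) (abs_nonneg _)
      simpa [abs_eq_zero] using h2
  have key : |lam| * |v a| ≤ (k : ℝ) * |v a| := by
    have h1 : (G.adjMatrix ℝ *ᵥ v) a = lam * v a := by rw [h]; simp
    rw [SimpleGraph.adjMatrix_mulVec_apply] at h1
    calc |lam| * |v a| = |∑ u ∈ G.neighborFinset a, v u| := by
          rw [← abs_mul, ← h1]
      _ ≤ ∑ u ∈ G.neighborFinset a, |v u| := Finset.abs_sum_le_sum_abs _ _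
      _ ≤ ∑ u ∈ G.neighborFinset a, |v a| := Finset.sum_le_sum fun u _ => ha u (mem_univ u)
      _ = (k : ℝ) * |v a| := by
          rw [Finset.sum_const, nsmul_eq_mul, SimpleGraph.card_neighborFinset_eq_degree, hreg a]
  have hla : |lam| ≤ (k : ℝ) := le_of_mul_le_mul_right key hva
  calc lam ≤ |lam| := le_abs_self lam
    _ ≤ (k : ℝ) := hla

end AuxMoore

set_option maxHeartbeats 1000000 in
/-- Let `G` be a finite connected `k`-regular graph (`k ≥ 2`) with at most
`d+1` distinct adjacency eigenvalues and `|V| > M(k, d-1) = 1 + k * ∑_{j=0}^{d-2} (k-1)^j`.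
Writing the distinct eigenvalues as `θ 0 > θ 1 > ⋯ > θ d`, with spectral projections
`E 0, …, E d`, for each vertex `x` and each `i ∈ {1, …, d}`, the number of vertices `y`
such that the `(x,y)`-entry of `E i` equals `-K i / |V|` is at least `|V| - M(k, d-1)`,
where `K i = ∏_{j ∈ {1,…,d}, j ≠ i} (θ 0 - θ j) / (θ i - θ j)`. -/
theorem stmt_4 {V : Type*} [Fintype V] [DecidableEq V]
    (G : SimpleGraph V) [DecidableRel G.Adj] (k d : ℕ) (hk : 2 ≤ k)
    (hconn : G.Connected) (hreg : G.IsRegularOfDegree k)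
    (hspec : (spectrum ℝ (G.adjMatrix ℝ)).ncard ≤ d + 1)
    (hcard : Fintype.card V > 1 + k * ∑ j ∈ Finset.range (d - 1), (k - 1) ^ j)
    (θ : Fin (d + 1) → ℝ) (hθ : StrictAnti θ)
    (E : Fin (d + 1) → Matrix V V ℝ)
    (hsymm : ∀ i, (E i).IsSymm)
    (hidem : ∀ i, E i * E i = E i)
    (horth : ∀ i j, i ≠ j → E i * E j = 0)
    (hsum : ∑ i, E i = 1)
    (hAE : ∀ i, G.adjMatrix ℝ * E i = θ i • E i)
    (hne : ∀ i, E i ≠ 0) :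
    ∀ x : V, ∀ i : Fin (d + 1), i ≠ 0 →
      Fintype.card V - (1 + k * ∑ j ∈ Finset.range (d - 1), (k - 1) ^ j) ≤
        {y : V | E i x y =
          -(∏ j ∈ Finset.univ.filter (fun j : Fin (d + 1) => j ≠ 0 ∧ j ≠ i),
              (θ 0 - θ j) / (θ i - θ j)) / (Fintype.card V : ℝ)}.ncard := by
  intro x i hi
  -- `d ≥ 1`
  have hd : 1 ≤ d := by
    rcases Nat.eq_zero_or_pos d with rfl | hd
    · exact absurd (Fin.ext (Nat.lt_one_iff.mp i.isLt)) hi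
    · exact hd
  have hn : 0 < Fintype.card V := lt_of_le_of_lt (Nat.zero_le _) hcard
  haveI : Nonempty V := Fintype.card_pos_iff.mp hn
  have hncast : (Fintype.card V : ℝ) ≠ 0 := Nat.cast_ne_zero.mpr hn.ne'
  -- E also multiplies A on the right with eigenvalue θ
  have hEA : ∀ m, E m * G.adjMatrix ℝ = θ m • E m := by
    intro m
    have h1 : (E m * G.adjMatrix ℝ)ᵀ = θ m • E m := by
      rw [Matrix.transpose_mul, SimpleGraph.transpose_adjMatrix, hsymm m]
      exact hAE m
    calc E m * G.adjMatrix ℝ = ((E m * G.adjMatrix ℝ)ᵀ)ᵀ := (transpose_transpose _).symm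
      _ = (θ m • E m)ᵀ := by rw [h1]
      _ = θ m • (E m)ᵀ := by rw [transpose_smul]
      _ = θ m • E m := by rw [hsymm m]
  -- powers of A
  have hApow : ∀ n : ℕ, G.adjMatrix ℝ ^ n = ∑ m, θ m ^ n • E m := by
    intro n
    induction n with
    | zero => simpa using hsum.symm
    | succ n ih =>
      rw [pow_succ, ih, Finset.sum_mul]
      refine Finset.sum_congr rfl fun m _ => ?_
      rw [Matrix.smul_mul, hEA m, smul_smul, ← pow_succ]
  -- polynomial evaluation of A
  have haeval : ∀ p : ℝ[X], aeval (G.adjMatrix ℝ) p = ∑ m, p.eval (θ m) • E m := by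
    intro p
    induction p using Polynomial.induction_on' with
    | add p q hp hq =>
      rw [map_add, hp, hq, ← Finset.sum_add_distrib]
      refine Finset.sum_congr rfl fun m _ => ?_
      rw [eval_add, add_smul]
    | monomial n a =>
      rw [aeval_monomial, ← Algebra.smul_def, hApow n, Finset.smul_sum]
      refine Finset.sum_congr rfl fun m _ => ?_
      rw [eval_monomial, smul_smul]
  set S : Finset (Fin (d + 1)) := Finset.univ.filter (fun j : Fin (d + 1) => j ≠ 0 ∧ j ≠ i)
    with hS
  set p : ℝ[X] := ∏ j ∈ S, (X - C (θ j)) with hp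
  have hScard : S.card = d - 1 := by
    have h1 : S = (Finset.univ.erase 0).erase i := by
      ext j
      simp only [hS, mem_filter, mem_univ, true_and, Finset.mem_erase]
      tauto
    rw [h1, Finset.card_erase_of_mem (by simp [Finset.mem_erase, hi]),
      Finset.card_erase_of_mem (mem_univ 0)]
    simp
  have hdeg : p.natDegree = d - 1 := by
    rw [hp, natDegree_prod _ _ (fun j _ => X_sub_C_ne_zero (θ j))]
    simp [natDegree_X_sub_C, hScard]
  have hθinj := hθ.injective
  have hevalS : ∀ m ∈ S, p.eval (θ m) = 0 := by
    intro m hm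
    rw [hp, eval_prod]
    exact Finset.prod_eq_zero hm (by simp)
  have hci : p.eval (θ i) ≠ 0 := by
    rw [hp, eval_prod]
    refine Finset.prod_ne_zero_iff.mpr fun j hj => ?_
    simp only [hS, mem_filter] at hj
    simp only [eval_sub, eval_X, eval_C]
    exact sub_ne_zero_of_ne fun h => hj.2.2 (hθinj h).symm
  have hc0 : p.eval (θ 0) ≠ 0 := by
    rw [hp, eval_prod]
    refine Finset.prod_ne_zero_iff.mpr fun j hj => ?_
    simp only [hS, mem_filter] at hj
    simp only [eval_sub, eval_X, eval_C]
    exact sub_ne_zero_of_ne fun h => hj.2.1 (hθinj h).symm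
  -- splitting of aeval of p
  have hsplit : aeval (G.adjMatrix ℝ) p = p.eval (θ 0) • E 0 + p.eval (θ i) • E i := by
    rw [haeval, ← Finset.sum_filter_add_sum_filter_not Finset.univ
      (fun j : Fin (d + 1) => j ≠ 0 ∧ j ≠ i)]
    have h1 : ∑ m ∈ Finset.univ.filter (fun j : Fin (d + 1) => j ≠ 0 ∧ j ≠ i),
        p.eval (θ m) • E m = 0 :=
      Finset.sum_eq_zero fun m hm => by rw [hevalS m hm, zero_smul]
    have h2 : Finset.univ.filter (fun j : Fin (d + 1) => ¬(j ≠ 0 ∧ j ≠ i)) = {0, i} := by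
      ext j
      simp only [mem_filter, mem_univ, true_and, Finset.mem_insert, Finset.mem_singleton]
      tauto
    rw [h1, h2, zero_add, Finset.sum_pair (Ne.symm hi)]
  -- θ 0 = k
  have hone : G.adjMatrix ℝ *ᵥ (fun _ => (1 : ℝ)) = (k : ℝ) • (fun _ => (1 : ℝ)) := by
    funext a
    rw [SimpleGraph.adjMatrix_mulVec_apply]
    simp [SimpleGraph.card_neighborFinset_eq_degree, hreg a]
  have hexk : ∃ m, θ m = (k : ℝ) := by
    by_contra hcon
    push_neg at hcon
    have hw : ∀ m, E m *ᵥ (fun _ => (1 : ℝ)) = 0 := by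
      intro m
      have h1 : (θ m) • (E m *ᵥ fun _ => (1 : ℝ)) = (k : ℝ) • (E m *ᵥ fun _ => (1 : ℝ)) := by
        calc (θ m) • (E m *ᵥ fun _ => (1 : ℝ))
            = (θ m • E m) *ᵥ (fun _ => (1 : ℝ)) := (smul_mulVec _ _ _).symm
          _ = (E m * G.adjMatrix ℝ) *ᵥ (fun _ => (1 : ℝ)) := by rw [hEA m]
          _ = E m *ᵥ (G.adjMatrix ℝ *ᵥ (fun _ => (1 : ℝ))) := (mulVec_mulVec _ _ _).symm
          _ = E m *ᵥ ((k : ℝ) • fun _ => (1 : ℝ)) := by rw [hone]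
          _ = (k : ℝ) • (E m *ᵥ fun _ => (1 : ℝ)) := mulVec_smul _ _ _
      have h2 : (θ m - (k : ℝ)) • (E m *ᵥ fun _ => (1 : ℝ)) = 0 := by
        rw [sub_smul, h1, sub_self]
      rcases smul_eq_zero.mp h2 with h | h
      · exact absurd (sub_eq_zero.mp h) (hcon m)
      · exact h
    have hzero : (fun _ => (1 : ℝ)) = (0 : V → ℝ) := by
      calc (fun _ => (1 : ℝ)) = (1 : Matrix V V ℝ) *ᵥ (fun _ => (1 : ℝ)) := (one_mulVec _).symm
        _ = (∑ m, E m) *ᵥ (fun _ => (1 : ℝ)) := by rw [hsum]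
        _ = ∑ m, E m *ᵥ (fun _ => (1 : ℝ)) := by
            funext a
            simp only [Matrix.mulVec, dotProduct, Matrix.sum_apply, Finset.sum_apply,
              Finset.sum_mul]
            rw [Finset.sum_comm]
        _ = 0 := by simp [hw]
    exact one_ne_zero (congrFun hzero (Classical.arbitrary V))
  have hθ0k : θ 0 = (k : ℝ) := by
    obtain ⟨m, hm⟩ := hexk
    have h2 : (k : ℝ) ≤ θ 0 := hm ▸ hθ.antitone (Fin.zero_le m)
    have h1 : θ 0 ≤ (k : ℝ) := by
      obtain ⟨a, b, hab⟩ : ∃ a b, E 0 a b ≠ 0 := by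
        by_contra hcon
        push_neg at hcon
        exact hne 0 (by ext a b; simpa using hcon a b)
      refine aux_eig_le G hreg (θ 0) (fun z => E 0 z b) ?_ ?_
      · intro h0
        exact hab (by simpa using congrFun h0 a)
      · funext c
        have h3 : (G.adjMatrix ℝ * E 0) c b = (θ 0 • E 0) c b := by rw [hAE 0]
        simpa [Matrix.mul_apply, Matrix.mulVec, dotProduct] using h3
    linarith
  -- E 0 is constant 1/|V|
  have hE0 : ∀ a b, E 0 a b = 1 / (Fintype.card V : ℝ) := by
    have hcol : ∀ b a a', E 0 a b = E 0 a' b := by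
      intro b
      have hL : G.lapMatrix ℝ *ᵥ (fun z => E 0 z b) = 0 := by
        funext c
        rw [Pi.zero_apply, SimpleGraph.lapMatrix_mulVec_apply]
        have h1 : ∑ u ∈ G.neighborFinset c, E 0 u b = (G.adjMatrix ℝ * E 0) c b := by
          rw [SimpleGraph.adjMatrix_mul_apply]
        rw [h1, hAE 0, hreg c]
        simp only [Matrix.smul_apply, smul_eq_mul, hθ0k]
        ring
      have h4 := (G.lapMatrix_mulVec_eq_zero_iff_forall_reachable (x := fun z => E 0 z b)).mp
        hL
      intro a a'
      exact h4 a a' (hconn a a')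
    have hsym0 : ∀ a b, E 0 a b = E 0 b a := fun a b => (hsymm 0).apply b a
    have hconst : ∀ a b a' b', E 0 a b = E 0 a' b' := by
      intro a b a' b'
      calc E 0 a b = E 0 a' b := hcol b a a'
        _ = E 0 b a' := hsym0 a' b
        _ = E 0 b' a' := hcol a' b b'
        _ = E 0 a' b' := (hsym0 a' b').symm
    obtain ⟨a0, b0, hab⟩ : ∃ a b, E 0 a b ≠ 0 := by
      by_contra hcon
      push_neg at hcon
      exact hne 0 (by ext a b; simpa using hcon a b)
    have hidem0 : (Fintype.card V : ℝ) * (E 0 a0 b0 * E 0 a0 b0) = E 0 a0 b0 := by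
      have h5 : (E 0 * E 0) a0 b0 = E 0 a0 b0 := by rw [hidem 0]
      rw [Matrix.mul_apply] at h5
      calc (Fintype.card V : ℝ) * (E 0 a0 b0 * E 0 a0 b0)
          = ∑ z : V, E 0 a0 z * E 0 z b0 := by
            rw [Finset.sum_congr rfl fun z _ => by
              rw [hconst a0 z a0 b0, hconst z b0 a0 b0]]
            rw [Finset.sum_const, nsmul_eq_mul, Finset.card_univ]
        _ = E 0 a0 b0 := h5
    have hval : E 0 a0 b0 = 1 / (Fintype.card V : ℝ) := by
      have h6 : (Fintype.card V : ℝ) * E 0 a0 b0 = 1 :=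
        mul_right_cancel₀ hab (by rw [one_mul]; rw [← mul_assoc] at hidem0; exact hidem0)
      field_simp
      linarith
    intro a b
    rw [hconst a b a0 b0, hval]
  -- key formula at distance ≥ d
  have hkey : ∀ y, d ≤ G.dist x y →
      E i x y = -(∏ j ∈ S, (θ 0 - θ j) / (θ i - θ j)) / (Fintype.card V : ℝ) := by
    intro y hy
    have hz : (aeval (G.adjMatrix ℝ) p) x y = 0 := by
      rw [aeval_eq_sum_range, Matrix.sum_apply]
      refine Finset.sum_eq_zero fun m hm => ?_
      rw [Matrix.smul_apply, aux_pow_entry G m x y ?_, smul_zero]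
      rw [Finset.mem_range, hdeg] at hm
      omega
    have heq : p.eval (θ 0) * E 0 x y + p.eval (θ i) * E i x y = 0 := by
      have h7 := congrFun (congrFun hsplit x) y
      rw [hz] at h7
      simpa [Matrix.add_apply, Matrix.smul_apply, smul_eq_mul] using h7.symm
    rw [hE0 x y] at heq
    have hev0 : p.eval (θ 0) = ∏ j ∈ S, (θ 0 - θ j) := by simp [hp, eval_prod]
    have hevi : p.eval (θ i) = ∏ j ∈ S, (θ i - θ j) := by simp [hp, eval_prod]
    field_simp at heq
    have h8 : E i x y = -(p.eval (θ 0)) / (p.eval (θ i) * (Fintype.card V : ℝ)) := by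
      rw [eq_div_iff (mul_ne_zero hci hncast)]
      linear_combination heq
    rw [h8, hev0, hevi, Finset.prod_div_distrib, neg_div, neg_div, div_div]
  -- counting
  have hball := aux_ball G hconn hreg x (d - 1)
  have hsub : ↑((Finset.univ.filter (fun y => G.dist x y ≤ d - 1))ᶜ) ⊆
      {y : V | E i x y =
        -(∏ j ∈ S, (θ 0 - θ j) / (θ i - θ j)) / (Fintype.card V : ℝ)} := by
    intro y hy
    simp only [Finset.coe_compl, Set.mem_compl_iff, Finset.mem_coe, mem_filter, mem_univ,
      true_and, not_le] at hy
    exact hkey y (by omega)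
  calc Fintype.card V - (1 + k * ∑ j ∈ Finset.range (d - 1), (k - 1) ^ j)
      ≤ ((Finset.univ.filter (fun y => G.dist x y ≤ d - 1))ᶜ).card := by
        rw [Finset.card_compl]
        exact Nat.sub_le_sub_left hball _
    _ = (↑((Finset.univ.filter (fun y => G.dist x y ≤ d - 1))ᶜ) : Set V).ncard :=
        (Set.ncard_coe_finset _).symm
    _ ≤ _ := Set.ncard_le_ncard hsub (Set.toFinite _)
end

section
/- Let X be a finite subset of the unit sphere S^{m-1} ⊂ ℝ^m with Gram matrix M, and suppose the Schur-diameter of M is equal to d and |A(X)| = d. Write A(X) = {θ*_1, ..., θ*_d} with θ*_1 > ... > θ*_d and set θ*_0 = 1. Then for each i ∈ {1,...,d}, the number -K*_i is an eigenvalue of the adjacency matrix A_i of the graph G_i = (X, R_i), where K*_i = ∏_{j∈{1,...,d}, j≠i} (θ*_0 - θ*_j)/(θ*_i - θ*_j). -/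
open scoped RealInnerProductSpace

attribute [local instance] Classical.propDecidable

/-- `A(X)`: the set of inner products between distinct points of `X`. -/
def innerSet (m : ℕ) (X : Finset (EuclideanSpace ℝ (Fin m))) : Set ℝ :=
  {t | ∃ x ∈ X, ∃ y ∈ X, x ≠ y ∧ ⟪x, y⟫ = t}

/-- The Schur-diameter of the Gram matrix of `X`: the least `d` such that some real
polynomial `q` of degree `d`, applied entrywise to the Gram matrix, yields a matrix of
full rank `|X|`. -/
noncomputable def schurDiam (m : ℕ) (X : Finset (EuclideanSpace ℝ (Fin m))) : ℕ :=
  sInf {d : ℕ | ∃ q : Polynomial ℝ, q.natDegree = d ∧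
    (Matrix.of fun x y : X =>
      Polynomial.eval ⟪(x : EuclideanSpace ℝ (Fin m)), (y : EuclideanSpace ℝ (Fin m))⟫ q).rank
        = X.card}

/-- The adjacency matrix `A_i` of the graph `(X, R_i)`, where
`R_i = {(x,y) : ⟪x,y⟫ = t}`. -/
noncomputable def relAdjMatrix (m : ℕ) (X : Finset (EuclideanSpace ℝ (Fin m))) (t : ℝ) :
    Matrix X X ℝ :=
  Matrix.of fun x y : X =>
    if ⟪(x : EuclideanSpace ℝ (Fin m)), (y : EuclideanSpace ℝ (Fin m))⟫ = t then 1 else 0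

/-- Let `X ⊆ S^{m-1}` be a finite set whose Gram matrix has
Schur-diameter `d` and with `|A(X)| = d`; write `A(X) = {θ 1, …, θ d}` with
`θ 1 > ⋯ > θ d` and `θ 0 = 1`.  Then for each `i ∈ {1, …, d}`, the number `-K i` is an
eigenvalue of the adjacency matrix `A_i` of the graph `(X, R_i)`, where
`K i = ∏_{j ∈ {1,…,d}, j ≠ i} (θ 0 - θ j) / (θ i - θ j)`. -/
theorem stmt_7 (m d : ℕ) (X : Finset (EuclideanSpace ℝ (Fin m)))
    (hsph : ∀ x ∈ X, ‖x‖ = 1) (hcard : 2 ≤ X.card)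
    (hsd : schurDiam m X = d)
    (hncard : (innerSet m X).ncard = d)
    (θ : Fin (d + 1) → ℝ) (hθ : StrictAnti θ) (hθ0 : θ 0 = 1)
    (hrange : innerSet m X = {t | ∃ i : Fin (d + 1), i ≠ 0 ∧ θ i = t}) :
    ∀ i : Fin (d + 1), i ≠ 0 →
      ∃ v : X → ℝ, v ≠ 0 ∧
        (relAdjMatrix m X (θ i)).mulVec v =
          (-(∏ j ∈ Finset.univ.filter (fun j : Fin (d + 1) => j ≠ 0 ∧ j ≠ i),
              (θ 0 - θ j) / (θ i - θ j))) • v := by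
  classical
  intro i hi
  have hd1 : 1 ≤ d := by
    have h0 : (i : ℕ) ≠ 0 := fun h => hi (Fin.ext h)
    have := i.isLt
    omega
  set S : Finset (Fin (d + 1)) :=
    Finset.univ.filter (fun j : Fin (d + 1) => j ≠ 0 ∧ j ≠ i) with hS
  have hθinj : Function.Injective θ := hθ.injective
  have hfac : ∀ j ∈ S, θ i - θ j ≠ 0 := by
    intro j hj
    have hji : j ≠ i := (Finset.mem_filter.mp hj).2.2
    exact sub_ne_zero.mpr (fun h => hji (hθinj h).symm)
  set c : ℝ := (∏ j ∈ S, (θ i - θ j))⁻¹ with hc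
  have hcne : c ≠ 0 := inv_ne_zero (Finset.prod_ne_zero_iff.mpr hfac)
  set F : Polynomial ℝ :=
    Polynomial.C c * ∏ j ∈ S, (Polynomial.X - Polynomial.C (θ j)) with hF
  have hevalF : ∀ t : ℝ, F.eval t = c * ∏ j ∈ S, (t - θ j) := by
    intro t
    simp [hF, Polynomial.eval_prod]
  -- degree of F
  have hScard : S.card = d - 1 := by
    have : S = Finset.univ \ {0, i} := by
      ext j
      simp [hS, Finset.mem_sdiff, and_comm]
    rw [this, Finset.card_sdiff_of_subset (by simp)]
    rw [Finset.card_insert_of_notMem (by simpa using hi.symm), Finset.card_singleton]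
    simp
  have hdegF : F.natDegree = d - 1 := by
    rw [hF, Polynomial.natDegree_C_mul hcne, Polynomial.natDegree_prod]
    · simp [Polynomial.natDegree_X_sub_C, hScard]
    · intro j _; exact Polynomial.X_sub_C_ne_zero _
  set K : ℝ := ∏ j ∈ S, (θ 0 - θ j) / (θ i - θ j) with hK
  have hKval : c * ∏ j ∈ S, (1 - θ j) = K := by
    rw [hK, Finset.prod_div_distrib, div_eq_mul_inv, mul_comm, ← hθ0, hc]
  have hθi1 : θ i ≠ 1 := by
    rw [← hθ0]
    intro h
    exact hi (hθinj h)
  -- inner products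
  have hinner : ∀ x : X, ⟪(x : EuclideanSpace ℝ (Fin m)), (x : EuclideanSpace ℝ (Fin m))⟫ = 1 := by
    intro x
    rw [real_inner_self_eq_norm_sq, hsph x x.2]; norm_num
  -- matrix identity
  have hM : (Matrix.of fun x y : X =>
      Polynomial.eval ⟪(x : EuclideanSpace ℝ (Fin m)), (y : EuclideanSpace ℝ (Fin m))⟫ F)
      = relAdjMatrix m X (θ i) + K • (1 : Matrix X X ℝ) := by
    ext x y
    by_cases hxy : x = y
    · subst hxy
      simp only [Matrix.of_apply, relAdjMatrix, Matrix.add_apply, Matrix.smul_apply,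
        Matrix.one_apply_eq, smul_eq_mul, mul_one]
      rw [hinner x, hevalF, hKval, if_neg (fun h => hθi1 h.symm), zero_add]
    · have hmem : ⟪(x : EuclideanSpace ℝ (Fin m)), (y : EuclideanSpace ℝ (Fin m))⟫ ∈
          innerSet m X := ⟨x, x.2, y, y.2, fun h => hxy (Subtype.ext h), rfl⟩
      rw [hrange] at hmem
      obtain ⟨j₀, hj₀0, hj₀⟩ := hmem
      simp only [Matrix.of_apply, relAdjMatrix, Matrix.add_apply, Matrix.smul_apply,
        smul_eq_mul]
      rw [Matrix.one_apply_ne (fun h : x = y => hxy h), mul_zero, add_zero, hevalF, ← hj₀]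
      by_cases hji : j₀ = i
      · subst hji
        rw [if_pos rfl, hc, inv_mul_cancel₀ (Finset.prod_ne_zero_iff.mpr hfac)]
      · have hj₀S : j₀ ∈ S := Finset.mem_filter.mpr ⟨Finset.mem_univ _, hj₀0, hji⟩
        rw [if_neg (fun h => hji (hθinj h)), Finset.prod_eq_zero hj₀S (by ring), mul_zero]
  -- rank argument
  have hrank : (relAdjMatrix m X (θ i) + K • (1 : Matrix X X ℝ)).rank ≠ X.card := by
    intro h
    have hmem : d - 1 ∈ {n : ℕ | ∃ q : Polynomial ℝ, q.natDegree = n ∧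
        (Matrix.of fun x y : X =>
          Polynomial.eval ⟪(x : EuclideanSpace ℝ (Fin m)),
            (y : EuclideanSpace ℝ (Fin m))⟫ q).rank = X.card} :=
      ⟨F, hdegF, by rw [hM]; exact h⟩
    have := Nat.sInf_le hmem
    rw [schurDiam] at hsd
    omega
  have hdet : (relAdjMatrix m X (θ i) + K • (1 : Matrix X X ℝ)).det = 0 := by
    by_contra hdet
    apply hrank
    rw [Matrix.rank_of_isUnit _ ((Matrix.isUnit_iff_isUnit_det _).mpr
      (isUnit_iff_ne_zero.mpr hdet))]
    exact Fintype.card_coe X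
  obtain ⟨v, hv0, hv⟩ := (Matrix.exists_mulVec_eq_zero_iff).mpr hdet
  refine ⟨v, hv0, ?_⟩
  rw [Matrix.add_mulVec, Matrix.smul_mulVec, Matrix.one_mulVec] at hv
  rw [neg_smul]
  exact eq_neg_of_add_eq_zero_left hv
end

section
/- Let X be a finite subset of the unit sphere S^{m-1} ⊂ ℝ^m with Gram matrix M, and suppose the Schur-diameter of M is equal to d and |A(X)| = d. Write A(X) = {θ*_1, ..., θ*_d} with θ*_1 > ... > θ*_d and set θ*_0 = 1. Then for each i ∈ {1,...,d}, the dimension of the eigenspace of the adjacency matrix A_i for the eigenvalue -K*_i (equivalently, the dimension of the kernel of A_i + K*_i·I) is at least |X| - N(m,d-1), where K*_i = ∏_{j∈{1,...,d}, j≠i} (θ*_0 - θ*_j)/(θ*_i - θ*_j) and N(m,d-1) = C(m+d-2, d-1) + C(m+d-3, d-2). -/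
open scoped RealInnerProductSpace

attribute [local instance] Classical.propDecidable

/-- The absolute bound `N(m, t) = C(m+t-1, t) + C(m+t-2, t-1)`, the dimension of the space
of restrictions to `S^{m-1}` of real polynomials of degree at most `t` in `m` variables
(with the convention `C(n, -1) = 0` for `t = 0`). -/
def absBound (m t : ℕ) : ℕ :=
  Nat.choose (m + t - 1) t + (if t = 0 then 0 else Nat.choose (m + t - 2) (t - 1))

section aux

variable {m : ℕ} (X : Finset (EuclideanSpace ℝ (Fin m)))

/-- The monomial function on `X` associated to a multiset of coordinate indices. -/
noncomputable def monFun (M : Multiset (Fin m)) : ↥X → ℝ :=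
  fun x => (M.map (fun j => (x : EuclideanSpace ℝ (Fin m)) j)).prod

/-- Span of the restrictions to `X` of monomials of degree `t` or `t-1`. -/
noncomputable def monSpace (t : ℕ) : Submodule ℝ (↥X → ℝ) :=
  Submodule.span ℝ
    ((Set.range fun s : Sym (Fin m) t => monFun X ↑s) ∪
     (Set.range fun s : Sym (Fin m) (t - 1) => monFun X ↑s))

lemma finrank_span_range_le {ι V : Type*} [Fintype ι] [AddCommGroup V] [Module ℝ V]
    (f : ι → V) :
    Module.finrank ℝ (Submodule.span ℝ (Set.range f)) ≤ Fintype.card ι := by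
  classical
  rw [← Set.image_univ, ← Finset.coe_univ, ← Finset.coe_image]
  exact (finrank_span_finset_le_card _).trans
    (Finset.card_image_le.trans (by simp))

lemma finrank_sup_le' {K V : Type*} [Field K] [AddCommGroup V] [Module K V]
    (A B : Submodule K V) [FiniteDimensional K A] [FiniteDimensional K B] :
    Module.finrank K ↥(A ⊔ B) ≤ Module.finrank K A + Module.finrank K B := by
  rw [← Submodule.finrank_sup_add_finrank_inf_eq A B]
  exact Nat.le_add_right _ _

lemma finrank_monSpace_le (t : ℕ) :
    Module.finrank ℝ (monSpace X t) ≤ absBound m t := by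
  classical
  rcases eq_or_ne t 0 with rfl | ht
  · have h : monSpace X 0 = Submodule.span ℝ
        (Set.range fun s : Sym (Fin m) 0 => monFun X ↑s) := by
      unfold monSpace; rw [Set.union_self]
    rw [h, absBound]
    simpa [Sym.card_sym_eq_multichoose] using
      finrank_span_range_le (fun s : Sym (Fin m) 0 => monFun X ↑s)
  · unfold monSpace
    rw [Submodule.span_union]
    have h1 := finrank_span_range_le (fun s : Sym (Fin m) t => monFun X ↑s)
    have h2 := finrank_span_range_le (fun s : Sym (Fin m) (t-1) => monFun X ↑s)
    refine (finrank_sup_le' _ _).trans ?_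
    rw [absBound, if_neg ht]
    have c1 : Fintype.card (Sym (Fin m) t) = (m + t - 1).choose t := by
      rw [Sym.card_sym_eq_multichoose, Fintype.card_fin, Nat.multichoose_eq]
    have c2 : Fintype.card (Sym (Fin m) (t-1)) = (m + t - 2).choose (t-1) := by
      rw [Sym.card_sym_eq_multichoose, Fintype.card_fin, Nat.multichoose_eq]
      congr 1
      omega
    omega

lemma monFun_toMultiset (α : Fin m →₀ ℕ) (x : ↥X) :
    monFun X α.toMultiset x = ∏ i ∈ α.support, (x : EuclideanSpace ℝ (Fin m)) i ^ α i := by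
  unfold monFun
  rw [Finsupp.toMultiset_map, Finsupp.prod_toMultiset,
    Finsupp.prod_mapDomain_index (fun _ => pow_zero _) (fun _ _ _ => pow_add _ _ _)]
  rfl

lemma inner_pow_mem_monSpace (hsph : ∀ x ∈ X, ‖x‖ = 1) (t : ℕ)
    (y : EuclideanSpace ℝ (Fin m)) (k : ℕ) (hk : k ≤ t) :
    (fun x : ↥X => (⟪(x : EuclideanSpace ℝ (Fin m)), y⟫) ^ k) ∈ monSpace X t := by
  classical
  set e := (t - k) / 2 with he
  have hs : k + 2 * e = t ∨ k + 2 * e = t - 1 := by omega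
  set P : MvPolynomial (Fin m) ℝ :=
    (∑ j, MvPolynomial.C (y j) * MvPolynomial.X j) ^ k *
      (∑ j, MvPolynomial.X j ^ 2) ^ e with hPdef
  have hhom : P.IsHomogeneous (k + 2 * e) := by
    have h1 : (∑ j, MvPolynomial.C (y j) * MvPolynomial.X j :
        MvPolynomial (Fin m) ℝ).IsHomogeneous 1 :=
      MvPolynomial.IsHomogeneous.sum _ _ _ fun j _ => (MvPolynomial.isHomogeneous_X ℝ j).C_mul _
    have h2 : (∑ j, (MvPolynomial.X j : MvPolynomial (Fin m) ℝ) ^ 2).IsHomogeneous 2 :=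
      MvPolynomial.IsHomogeneous.sum _ _ _ fun j _ => by
        simpa using (MvPolynomial.isHomogeneous_X ℝ j).pow 2
    simpa using (h1.pow k).mul (h2.pow e)
  have heval : ∀ x : ↥X, MvPolynomial.eval (fun j => (x : EuclideanSpace ℝ (Fin m)) j) P
      = ⟪(x : EuclideanSpace ℝ (Fin m)), y⟫ ^ k := by
    intro x
    have hnorm : ∑ j, (x : EuclideanSpace ℝ (Fin m)) j * (x : EuclideanSpace ℝ (Fin m)) j = 1 := by
      have h := real_inner_self_eq_norm_sq (x : EuclideanSpace ℝ (Fin m))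
      rw [hsph x x.2] at h
      rw [one_pow] at h
      rw [← h, PiLp.inner_apply]
      simp [RCLike.inner_apply, sq]
    have hinner : ⟪(x : EuclideanSpace ℝ (Fin m)), y⟫
        = ∑ j, y j * (x : EuclideanSpace ℝ (Fin m)) j := by
      simp [PiLp.inner_apply, RCLike.inner_apply, mul_comm]
    simp only [hPdef, map_mul, map_pow, map_sum, MvPolynomial.eval_mul, MvPolynomial.eval_C,
      MvPolynomial.eval_X, MvPolynomial.eval_pow, sq]
    rw [hnorm, hinner, one_pow, mul_one]
  have hexp : (fun x : ↥X => (⟪(x : EuclideanSpace ℝ (Fin m)), y⟫) ^ k)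
      = ∑ α ∈ P.support, P.coeff α • monFun X α.toMultiset := by
    funext x
    rw [Finset.sum_apply, ← heval x, MvPolynomial.eval_eq]
    exact Finset.sum_congr rfl fun α _ => by
      rw [Pi.smul_apply, monFun_toMultiset, smul_eq_mul]
  rw [hexp]
  refine Submodule.sum_mem _ fun α hα => Submodule.smul_mem _ _ (Submodule.subset_span ?_)
  have hdeg : Multiset.card α.toMultiset = k + 2 * e := by
    rw [Finsupp.card_toMultiset, ← hhom (MvPolynomial.mem_support_iff.mp hα)]
    simp [Finsupp.weight_apply, Finsupp.sum]
  rcases hs with h | h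
  · exact Or.inl ⟨⟨α.toMultiset, by rw [hdeg, h]⟩, rfl⟩
  · exact Or.inr ⟨⟨α.toMultiset, by rw [hdeg, h]⟩, rfl⟩

end aux

/-- Let `X ⊆ S^{m-1}` be a finite set whose Gram matrix has
Schur-diameter `d` and with `|A(X)| = d`; write `A(X) = {θ 1, …, θ d}` with
`θ 1 > ⋯ > θ d` and `θ 0 = 1`.  Then for each `i ∈ {1, …, d}`, the dimension of the
kernel of `A_i + K i • I` is at least `|X| - N(m, d-1)`, where
`K i = ∏_{j ∈ {1,…,d}, j ≠ i} (θ 0 - θ j) / (θ i - θ j)` and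
`N(m, d-1) = C(m+d-2, d-1) + C(m+d-3, d-2)`. -/
theorem stmt_8 (m d : ℕ) (X : Finset (EuclideanSpace ℝ (Fin m)))
    (hsph : ∀ x ∈ X, ‖x‖ = 1) (hcard : 2 ≤ X.card)
    (hsd : schurDiam m X = d)
    (hncard : (innerSet m X).ncard = d)
    (θ : Fin (d + 1) → ℝ) (hθ : StrictAnti θ) (hθ0 : θ 0 = 1)
    (hrange : innerSet m X = {t | ∃ i : Fin (d + 1), i ≠ 0 ∧ θ i = t}) :
    ∀ i : Fin (d + 1), i ≠ 0 →
      (X.card : ℤ) - (absBound m (d - 1) : ℤ) ≤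
        (Module.finrank ℝ
          (LinearMap.ker
            (Matrix.mulVecLin
              (relAdjMatrix m X (θ i) +
                (∏ j ∈ Finset.univ.filter (fun j : Fin (d + 1) => j ≠ 0 ∧ j ≠ i),
                  (θ 0 - θ j) / (θ i - θ j)) • (1 : Matrix X X ℝ)))) : ℤ) := by
  classical
  intro i hi
  have hθinj := hθ.injective
  set S := Finset.univ.filter (fun j : Fin (d + 1) => j ≠ 0 ∧ j ≠ i) with hS
  set K := ∏ j ∈ S, (θ 0 - θ j) / (θ i - θ j) with hK
  set B := relAdjMatrix m X (θ i) + K • (1 : Matrix X X ℝ) with hB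
  set F : Polynomial ℝ :=
    ∏ j ∈ S, (Polynomial.C ((θ i - θ j)⁻¹) * (Polynomial.X - Polynomial.C (θ j))) with hF
  -- degree bound
  have hcardS : S.card = d - 1 := by
    have h1 : S = Finset.univ \ {0, i} := by
      ext j
      simp [hS, and_comm]
    have hd : 1 ≤ d := by
      rcases Nat.eq_zero_or_pos d with h | h
      · subst h; exact absurd (Fin.fin_one_eq_zero i) hi
      · exact h
    have h2 : ({0, i} : Finset (Fin (d + 1))).card = 2 := by
      rw [Finset.card_insert_of_notMem (by simpa using Ne.symm hi), Finset.card_singleton]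
    rw [h1, Finset.card_sdiff_of_subset (Finset.subset_univ _), Finset.card_univ, Fintype.card_fin, h2]
    omega
  have hdegF : F.natDegree ≤ d - 1 := by
    rw [hF]
    refine (Polynomial.natDegree_prod_le _ _).trans ?_
    have hb : ∀ j ∈ S,
        (Polynomial.C ((θ i - θ j)⁻¹) * (Polynomial.X - Polynomial.C (θ j))).natDegree ≤ 1 :=
      fun j _ => (Polynomial.natDegree_C_mul_le _ _).trans (by simp [Polynomial.natDegree_X_sub_C])
    refine (Finset.sum_le_sum hb).trans ?_
    rw [Finset.sum_const, smul_eq_mul, mul_one, hcardS]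
  -- evaluations of F
  have hFeval1 : F.eval 1 = K := by
    rw [hF, Polynomial.eval_prod, hK]
    refine Finset.prod_congr rfl fun j hj => ?_
    simp [div_eq_inv_mul, hθ0]
  have hFevali : F.eval (θ i) = 1 := by
    rw [hF, Polynomial.eval_prod]
    refine Finset.prod_eq_one fun j hj => ?_
    have hji : j ≠ i := (Finset.mem_filter.mp hj).2.2
    have hne : θ i - θ j ≠ 0 := sub_ne_zero.mpr fun h => hji (hθinj h).symm
    simp [inv_mul_cancel₀ hne]
  have hFevalj : ∀ j ∈ S, F.eval (θ j) = 0 := fun j hj => by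
    rw [hF, Polynomial.eval_prod]
    exact Finset.prod_eq_zero hj (by simp)
  -- entrywise description of B
  have hentry : ∀ x y : ↥X,
      B x y = F.eval ⟪(x : EuclideanSpace ℝ (Fin m)), (y : EuclideanSpace ℝ (Fin m))⟫ := by
    intro x y
    by_cases hxy : x = y
    · subst hxy
      have hxx : ⟪(x : EuclideanSpace ℝ (Fin m)), (x : EuclideanSpace ℝ (Fin m))⟫ = 1 := by
        rw [real_inner_self_eq_norm_sq, hsph x x.2]; norm_num
      have hlt : θ i < 1 := by
        have := hθ (Fin.pos_of_ne_zero hi)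
        rwa [hθ0] at this
      have hne : ⟪(x : EuclideanSpace ℝ (Fin m)), (x : EuclideanSpace ℝ (Fin m))⟫ ≠ θ i := by
        rw [hxx]; exact fun h => absurd h.symm (ne_of_lt hlt)
      rw [hxx, hFeval1, hB]
      simp only [Matrix.add_apply, Matrix.smul_apply, Matrix.one_apply_eq, smul_eq_mul, mul_one,
        relAdjMatrix, Matrix.of_apply]
      rw [if_neg hne, zero_add]
    · have hone : (1 : Matrix ↥X ↥X ℝ) x y = 0 := Matrix.one_apply_ne hxy
      have hmem : ⟪(x : EuclideanSpace ℝ (Fin m)), (y : EuclideanSpace ℝ (Fin m))⟫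
          ∈ innerSet m X :=
        ⟨x, x.2, y, y.2, fun h => hxy (Subtype.ext h), rfl⟩
      rw [hrange] at hmem
      obtain ⟨j, hj0, hjv⟩ := hmem
      rw [hB]
      simp only [Matrix.add_apply, Matrix.smul_apply, hone, smul_eq_mul, mul_zero, add_zero,
        relAdjMatrix, Matrix.of_apply]
      by_cases hji : j = i
      · subst hji
        rw [if_pos hjv.symm, ← hjv, hFevali]
      · have hjS : j ∈ S := by simp [hS, hj0, hji]
        have hne : θ j ≠ θ i := fun h => hji (hθinj h)
        rw [← hjv, if_neg hne, hFevalj j hjS]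
  -- columns of B lie in the monomial space
  have hcol : ∀ y : ↥X, (fun x : ↥X => B x y) ∈ monSpace X (d - 1) := by
    intro y
    have hexp : (fun x : ↥X => B x y)
        = ∑ k ∈ Finset.range (d - 1 + 1), F.coeff k •
            fun x : ↥X => (⟪(x : EuclideanSpace ℝ (Fin m)), (y : EuclideanSpace ℝ (Fin m))⟫) ^ k := by
      funext x
      rw [hentry, Polynomial.eval_eq_sum_range' (Nat.lt_succ_of_le hdegF), Finset.sum_apply]
      exact Finset.sum_congr rfl fun k _ => by rw [Pi.smul_apply, smul_eq_mul]
    rw [hexp]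
    exact Submodule.sum_mem _ fun k hk => Submodule.smul_mem _ _ <|
      inner_pow_mem_monSpace X hsph (d - 1) _ k (Nat.lt_succ_iff.mp (Finset.mem_range.mp hk))
  -- range of mulVecLin is contained in the monomial space
  have hrangeLe : LinearMap.range B.mulVecLin ≤ monSpace X (d - 1) := by
    rintro f ⟨v, rfl⟩
    have hexp : B.mulVecLin v = ∑ y : ↥X, v y • fun x : ↥X => B x y := by
      funext x
      simp [Matrix.mulVecLin_apply, Matrix.mulVec, dotProduct, Finset.sum_apply, mul_comm]
    rw [hexp]
    exact Submodule.sum_mem _ fun y _ => Submodule.smul_mem _ _ (hcol y)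
  have hrank : Module.finrank ℝ (LinearMap.range B.mulVecLin) ≤ absBound m (d - 1) :=
    (Submodule.finrank_mono hrangeLe).trans (finrank_monSpace_le X (d - 1))
  have hrn := LinearMap.finrank_range_add_finrank_ker B.mulVecLin
  have hdim : Module.finrank ℝ (↥X → ℝ) = X.card := by
    rw [Module.finrank_pi, Fintype.card_coe]
  rw [hdim] at hrn
  omega
end

section
/- Let X be a finite subset of the unit sphere S^{m-1} ⊂ ℝ^m with |A(X)| ≤ d. If |X| > N(m,d-1) = C(m+d-2, d-1) + C(m+d-3, d-2), then the Schur-diameter of the Gram matrix M of X is equal to d. -/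
open scoped RealInnerProductSpace

section Aux

variable {m : ℕ} {X : Finset (EuclideanSpace ℝ (Fin m))}

private lemma stmt9_inner_eq_sum (x y : EuclideanSpace ℝ (Fin m)) :
    ⟪x, y⟫ = ∑ i, x i * y i := by
  simp [PiLp.inner_apply, RCLike.inner_apply, conj_trivial]
  exact Finset.sum_congr rfl fun _ _ => mul_comm _ _

/-- the monomial function attached to a multiset of indices, restricted to `X` -/
private def stmt9_monFun (X : Finset (EuclideanSpace ℝ (Fin m))) (s : Multiset (Fin m)) :
    {x // x ∈ X} → ℝ :=
  fun x => (s.map (fun i => (x : EuclideanSpace ℝ (Fin m)) i)).prod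

/-- generators: monomials of degree `t` and `t-1` -/
private def stmt9_gen (X : Finset (EuclideanSpace ℝ (Fin m))) (t : ℕ) :
    Sym (Fin m) t ⊕ Sym (Fin m) (t - 1) → ({x // x ∈ X} → ℝ) :=
  fun i => stmt9_monFun X (Sum.elim (fun s => Sym.toMultiset s) (fun s => Sym.toMultiset s) i)

private lemma stmt9_sum_sq_eq_one (hsph : ∀ x ∈ X, ‖x‖ = 1) (x : {x // x ∈ X}) :
    ∑ i, (x : EuclideanSpace ℝ (Fin m)) i * (x : EuclideanSpace ℝ (Fin m)) i = 1 := by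
  have h := stmt9_inner_eq_sum (x : EuclideanSpace ℝ (Fin m)) (x : EuclideanSpace ℝ (Fin m))
  rw [real_inner_self_eq_norm_sq, hsph x x.2] at h
  simpa using h.symm

private lemma stmt9_mon_mem (hsph : ∀ x ∈ X, ‖x‖ = 1) {t : ℕ} (ht : t ≠ 0) :
    ∀ n (s : Multiset (Fin m)), Multiset.card s + n = t →
      stmt9_monFun X s ∈ Submodule.span ℝ (Set.range (stmt9_gen X t)) := by
  intro n
  induction n using Nat.strong_induction_on with
  | _ n ih =>
    intro s hs
    match n, hs with
    | 0, hs =>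
      exact Submodule.subset_span ⟨Sum.inl ⟨s, by simpa using hs⟩, rfl⟩
    | 1, hs =>
      exact Submodule.subset_span ⟨Sum.inr ⟨s, by omega⟩, rfl⟩
    | (n + 2), hs =>
      have key : stmt9_monFun X s = ∑ i : Fin m, stmt9_monFun X (i ::ₘ i ::ₘ s) := by
        funext x
        have h1 := stmt9_sum_sq_eq_one hsph x
        simp only [stmt9_monFun, Multiset.map_cons, Multiset.prod_cons, Finset.sum_apply,
          ← mul_assoc]
        rw [← Finset.sum_mul, h1, one_mul]
      rw [key]
      refine Submodule.sum_mem _ fun i _ => ih n (by omega) _ (by simp; omega)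

private lemma stmt9_pow_mem (hsph : ∀ x ∈ X, ‖x‖ = 1) {t : ℕ} (ht : t ≠ 0)
    (y : EuclideanSpace ℝ (Fin m)) {k : ℕ} (hk : k ≤ t) :
    (fun x : {x // x ∈ X} => ⟪(x : EuclideanSpace ℝ (Fin m)), y⟫ ^ k)
      ∈ Submodule.span ℝ (Set.range (stmt9_gen X t)) := by
  have key : (fun x : {x // x ∈ X} => ⟪(x : EuclideanSpace ℝ (Fin m)), y⟫ ^ k)
      = ∑ g ∈ Fintype.piFinset (fun _ : Fin k => (Finset.univ : Finset (Fin m))),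
          (∏ j, y (g j)) • stmt9_monFun X (Multiset.map g Finset.univ.val) := by
    funext x
    simp only [Finset.sum_apply, Pi.smul_apply, smul_eq_mul]
    rw [stmt9_inner_eq_sum]
    calc (∑ i, (x : EuclideanSpace ℝ (Fin m)) i * y i) ^ k
        = ∏ _j : Fin k, (∑ i, (x : EuclideanSpace ℝ (Fin m)) i * y i) := by
          simp [Finset.prod_const]
      _ = ∑ g ∈ Fintype.piFinset (fun _ : Fin k => (Finset.univ : Finset (Fin m))),
            ∏ j, (x : EuclideanSpace ℝ (Fin m)) (g j) * y (g j) := by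
          rw [Finset.prod_univ_sum]
      _ = _ := by
          refine Finset.sum_congr rfl fun g _ => ?_
          rw [Finset.prod_mul_distrib, mul_comm]
          congr 1
          simp [stmt9_monFun, Multiset.map_map, Finset.prod, Function.comp_def]
  rw [key]
  exact Submodule.sum_mem _ fun g _ => Submodule.smul_mem _ _
    (stmt9_mon_mem hsph ht (t - k) _ (by simp; omega))

private lemma stmt9_rank_le_of_range_le {ι : Type*} [Fintype ι]
    (M : Matrix {x // x ∈ X} {x // x ∈ X} ℝ) (b : ι → ({x // x ∈ X} → ℝ))
    (h : LinearMap.range M.mulVecLin ≤ Submodule.span ℝ (Set.range b)) :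
    M.rank ≤ Fintype.card ι := by
  refine le_trans ?_ (finrank_range_le_card (R := ℝ) b)
  exact Submodule.finrank_mono h

private lemma stmt9_rank_le_absBound (hsph : ∀ x ∈ X, ‖x‖ = 1) (t : ℕ) (q : Polynomial ℝ)
    (hq : q.natDegree ≤ t) :
    (Matrix.of fun x y : X =>
      Polynomial.eval ⟪(x : EuclideanSpace ℝ (Fin m)), (y : EuclideanSpace ℝ (Fin m))⟫ q).rank
        ≤ absBound m t := by
  classical
  set M : Matrix {x // x ∈ X} {x // x ∈ X} ℝ := Matrix.of fun x y : X =>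
      Polynomial.eval ⟪(x : EuclideanSpace ℝ (Fin m)), (y : EuclideanSpace ℝ (Fin m))⟫ q with hM
  have hcol : ∀ v, M.mulVecLin v = ∑ y, v y • (fun x => M x y) := by
    intro v
    funext x
    simp [Matrix.mulVecLin_apply, Matrix.mulVec, dotProduct, mul_comm]
  rcases Nat.eq_zero_or_pos t with ht | ht
  · subst ht
    obtain ⟨c, rfl⟩ := Polynomial.natDegree_eq_zero.mp (Nat.le_zero.mp hq)
    have hb : LinearMap.range M.mulVecLin
        ≤ Submodule.span ℝ (Set.range (fun _ : Unit => (fun _ : {x // x ∈ X} => (1 : ℝ)))) := by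
      rintro _ ⟨v, rfl⟩
      rw [hcol]
      refine Submodule.sum_mem _ fun y _ => Submodule.smul_mem _ _ ?_
      have : (fun x : {x // x ∈ X} => M x y) = c • (fun _ : {x // x ∈ X} => (1 : ℝ)) := by
        funext x; simp [hM]
      rw [this]
      exact Submodule.smul_mem _ _ (Submodule.subset_span ⟨(), rfl⟩)
    have := stmt9_rank_le_of_range_le M _ hb
    simpa [absBound] using this
  · have ht' : t ≠ 0 := ht.ne'
    have hb : LinearMap.range M.mulVecLin ≤ Submodule.span ℝ (Set.range (stmt9_gen X t)) := by
      rintro _ ⟨v, rfl⟩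
      rw [hcol]
      refine Submodule.sum_mem _ fun y _ => Submodule.smul_mem _ _ ?_
      have hcoly : (fun x : {x // x ∈ X} => M x y)
          = ∑ k ∈ Finset.range (t + 1), q.coeff k •
              (fun x : {x // x ∈ X} =>
                ⟪(x : EuclideanSpace ℝ (Fin m)), (y : EuclideanSpace ℝ (Fin m))⟫ ^ k) := by
        funext x
        simp only [hM, Matrix.of_apply, Finset.sum_apply, Pi.smul_apply, smul_eq_mul]
        exact Polynomial.eval_eq_sum_range' (lt_of_le_of_lt hq (Nat.lt_succ_self t)) _
      rw [hcoly]
      exact Submodule.sum_mem _ fun k hk => Submodule.smul_mem _ _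
        (stmt9_pow_mem hsph ht' _ (Nat.lt_succ_iff.mp (Finset.mem_range.mp hk)))
    have := stmt9_rank_le_of_range_le M _ hb
    rw [Fintype.card_sum, Sym.card_sym_eq_choose, Sym.card_sym_eq_choose, Fintype.card_fin] at this
    simpa [absBound, ht', show m + (t - 1) - 1 = m + t - 2 by omega] using this

end Aux

/-- Let `X ⊆ S^{m-1}` be a finite set with `|A(X)| ≤ d`.  If
`|X| > N(m, d-1) = C(m+d-2, d-1) + C(m+d-3, d-2)`, then the Schur-diameter of the
Gram matrix of `X` is equal to `d`. -/
theorem stmt_9 (m d : ℕ) (X : Finset (EuclideanSpace ℝ (Fin m)))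
    (hsph : ∀ x ∈ X, ‖x‖ = 1) (hcard : 2 ≤ X.card)
    (hncard : (innerSet m X).ncard ≤ d)
    (hbig : X.card > absBound m (d - 1)) :
    schurDiam m X = d := by
  classical
  set A : Finset ℝ :=
    ((X ×ˢ X).filter fun p => p.1 ≠ p.2).image fun p => ⟪p.1, p.2⟫ with hA
  have hAset : innerSet m X = ↑A := by
    ext t
    simp only [innerSet, Set.mem_setOf_eq, hA, Finset.coe_image, Set.mem_image,
      Finset.mem_coe, Finset.mem_filter, Finset.mem_product]
    constructor
    · rintro ⟨x, hx, y, hy, hxy, rfl⟩; exact ⟨(x, y), ⟨⟨hx, hy⟩, hxy⟩, rfl⟩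
    · rintro ⟨⟨x, y⟩, ⟨⟨hx, hy⟩, hxy⟩, rfl⟩; exact ⟨x, hx, y, hy, hxy, rfl⟩
  have hAcard : A.card ≤ d := by
    rwa [hAset, Set.ncard_coe_finset] at hncard
  have hA1 : ∀ a ∈ A, a ≠ 1 := by
    intro a ha h1
    simp only [hA, Finset.mem_image, Finset.mem_filter, Finset.mem_product] at ha
    obtain ⟨⟨x, y⟩, ⟨⟨hx, hy⟩, hxy⟩, rfl⟩ := ha
    dsimp only at hx hy hxy h1
    apply hxy
    have : ‖x - y‖ ^ 2 = 0 := by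
      rw [norm_sub_sq_real, hsph x hx, hsph y hy, h1]; ring
    have := pow_eq_zero_iff (n := 2) (by norm_num) |>.mp this
    exact sub_eq_zero.mp (norm_eq_zero.mp this)
  have hAne : A.Nonempty := by
    obtain ⟨x, hx, y, hy, hxy⟩ := Finset.one_lt_card.mp hcard
    refine ⟨⟪x, y⟫, ?_⟩
    simp only [hA, Finset.mem_image, Finset.mem_filter, Finset.mem_product]
    exact ⟨(x, y), ⟨⟨hx, hy⟩, hxy⟩, rfl⟩
  have hd1 : 1 ≤ d := le_trans (Finset.Nonempty.card_pos hAne) hAcard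
  -- the annihilator polynomial
  set q : Polynomial ℝ :=
    (∏ a ∈ A, (Polynomial.X - Polynomial.C a)) * Polynomial.X ^ (d - A.card) with hq
  have hqdeg : q.natDegree = d := by
    rw [hq, Polynomial.natDegree_mul, Polynomial.natDegree_prod _ _
      (fun a _ => Polynomial.X_sub_C_ne_zero a), Polynomial.natDegree_X_pow]
    · simp only [Polynomial.natDegree_X_sub_C, Finset.sum_const, smul_eq_mul, mul_one]
      omega
    · exact (Polynomial.monic_prod_of_monic _ _
        fun a _ => Polynomial.monic_X_sub_C a).ne_zero
    · exact pow_ne_zero _ Polynomial.X_ne_zero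
  have hq1 : q.eval 1 ≠ 0 := by
    rw [hq]
    simp only [Polynomial.eval_mul, Polynomial.eval_pow, Polynomial.eval_X, one_pow, mul_one,
      Polynomial.eval_prod, Polynomial.eval_sub, Polynomial.eval_X, Polynomial.eval_C]
    exact Finset.prod_ne_zero_iff.mpr fun a ha => sub_ne_zero.mpr (Ne.symm (hA1 a ha))
  have hq0 : ∀ a ∈ A, q.eval a = 0 := by
    intro a ha
    rw [hq]
    simp only [Polynomial.eval_mul, Polynomial.eval_prod]
    rw [Finset.prod_eq_zero ha (by simp)]
    simp
  -- the matrix for q is q(1) • 1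
  have hMq : (Matrix.of fun x y : X =>
      Polynomial.eval ⟪(x : EuclideanSpace ℝ (Fin m)), (y : EuclideanSpace ℝ (Fin m))⟫ q)
      = (q.eval 1) • (1 : Matrix {x // x ∈ X} {x // x ∈ X} ℝ) := by
    ext x y
    simp only [Matrix.of_apply, Matrix.smul_apply, Matrix.one_apply, smul_eq_mul]
    by_cases hxy : x = y
    · subst hxy
      rw [if_pos rfl, mul_one]
      congr 1
      rw [real_inner_self_eq_norm_sq, hsph x x.2, one_pow]
    · rw [if_neg hxy, mul_zero]
      apply hq0
      simp only [hA, Finset.mem_image, Finset.mem_filter, Finset.mem_product]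
      exact ⟨((x : EuclideanSpace ℝ (Fin m)), (y : EuclideanSpace ℝ (Fin m))),
        ⟨⟨x.2, y.2⟩, fun h => hxy (Subtype.ext h)⟩, rfl⟩
  have hrank : (Matrix.of fun x y : X =>
      Polynomial.eval ⟪(x : EuclideanSpace ℝ (Fin m)), (y : EuclideanSpace ℝ (Fin m))⟫ q).rank
      = X.card := by
    rw [hMq, ← Fintype.card_coe X]
    apply Matrix.rank_of_isUnit
    rw [Matrix.isUnit_iff_isUnit_det, Matrix.det_smul, Matrix.det_one, mul_one, isUnit_iff_ne_zero]
    exact pow_ne_zero _ hq1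
  have hmem : d ∈ {e : ℕ | ∃ q : Polynomial ℝ, q.natDegree = e ∧
      (Matrix.of fun x y : X =>
        Polynomial.eval ⟪(x : EuclideanSpace ℝ (Fin m)), (y : EuclideanSpace ℝ (Fin m))⟫ q).rank
          = X.card} := ⟨q, hqdeg, hrank⟩
  have hlb : ∀ e ∈ {e : ℕ | ∃ q : Polynomial ℝ, q.natDegree = e ∧
      (Matrix.of fun x y : X =>
        Polynomial.eval ⟪(x : EuclideanSpace ℝ (Fin m)), (y : EuclideanSpace ℝ (Fin m))⟫ q).rank
          = X.card}, d ≤ e := by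
    rintro e ⟨p, hpdeg, hprank⟩
    by_contra hlt
    push_neg at hlt
    have hple : p.natDegree ≤ d - 1 := by omega
    have := stmt9_rank_le_absBound hsph (d - 1) p hple
    omega
  exact le_antisymm (Nat.sInf_le hmem) (hlb _ (Nat.sInf_mem ⟨d, hmem⟩))
end

section
/- Let X be a finite subset of the unit sphere S^{m-1} ⊂ ℝ^m with |A(X)| ≤ d. If |X| > N(m,d-1) = C(m+d-2, d-1) + C(m+d-3, d-2), then |A(X)| = d, i.e., exactly d inner products occur between distinct points of X. -/
open scoped RealInnerProductSpace

namespace Stmt10Aux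

variable {m : ℕ}

/-- monomial function on `X` given by a multiset of indices -/
noncomputable def mono (X : Finset (EuclideanSpace ℝ (Fin m))) (μ : Multiset (Fin m)) :
    ↥X → ℝ :=
  fun y => (μ.map (fun i => (y : EuclideanSpace ℝ (Fin m)) i)).prod

def MS (X : Finset (EuclideanSpace ℝ (Fin m))) (k : ℕ) : Set (↥X → ℝ) :=
  mono X '' {μ | Multiset.card μ = k}

lemma mono_mul (X : Finset (EuclideanSpace ℝ (Fin m))) (μ ν : Multiset (Fin m)) :
    mono X μ * mono X ν = mono X (μ + ν) := by
  funext y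
  simp [mono, Multiset.prod_add]

lemma mono_mul_mem (X : Finset (EuclideanSpace ℝ (Fin m))) {k l : ℕ} {μ : Multiset (Fin m)}
    (hμ : Multiset.card μ = k) {g : ↥X → ℝ} (hg : g ∈ Submodule.span ℝ (MS X l)) :
    mono X μ * g ∈ Submodule.span ℝ (MS X (k + l)) := by
  have h1 : (LinearMap.mulLeft ℝ (mono X μ)) g ∈
      Submodule.map (LinearMap.mulLeft ℝ (mono X μ)) (Submodule.span ℝ (MS X l)) :=
    Submodule.mem_map_of_mem hg
  rw [Submodule.map_span] at h1
  refine Submodule.span_le.2 ?_ h1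
  rintro _ ⟨_, ⟨ν, hν, rfl⟩, rfl⟩
  refine Submodule.subset_span ⟨μ + ν, ?_, ?_⟩
  · simp only [Set.mem_setOf_eq] at hν ⊢
    simp [Multiset.card_add, hμ, hν]
  · simpa [LinearMap.mulLeft_apply] using (mono_mul X μ ν).symm

lemma mul_mem_span (X : Finset (EuclideanSpace ℝ (Fin m))) {k l : ℕ} {f g : ↥X → ℝ}
    (hf : f ∈ Submodule.span ℝ (MS X k)) (hg : g ∈ Submodule.span ℝ (MS X l)) :
    f * g ∈ Submodule.span ℝ (MS X (k + l)) := by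
  have h1 : (LinearMap.mulRight ℝ g) f ∈
      Submodule.map (LinearMap.mulRight ℝ g) (Submodule.span ℝ (MS X k)) :=
    Submodule.mem_map_of_mem hf
  rw [Submodule.map_span] at h1
  refine Submodule.span_le.2 ?_ h1
  rintro _ ⟨_, ⟨μ, hμ, rfl⟩, rfl⟩
  simpa [LinearMap.mulRight_apply] using mono_mul_mem X hμ hg

lemma sum_sq (X : Finset (EuclideanSpace ℝ (Fin m))) (hsph : ∀ x ∈ X, ‖x‖ = 1) (y : ↥X) :
    ∑ i, (y : EuclideanSpace ℝ (Fin m)) i * (y : EuclideanSpace ℝ (Fin m)) i = 1 := by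
  have h1 : ⟪(y : EuclideanSpace ℝ (Fin m)), (y : EuclideanSpace ℝ (Fin m))⟫ = 1 := by
    rw [real_inner_self_eq_norm_sq, hsph y.1 y.2]; norm_num
  rw [← h1]
  simp only [PiLp.inner_apply, RCLike.inner_apply, conj_trivial]

lemma mono_mem_up (X : Finset (EuclideanSpace ℝ (Fin m))) (hsph : ∀ x ∈ X, ‖x‖ = 1)
    (μ : Multiset (Fin m)) :
    mono X μ ∈ Submodule.span ℝ (MS X (Multiset.card μ + 2)) := by
  have key : mono X μ = ∑ i : Fin m, mono X (i ::ₘ i ::ₘ μ) := by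
    funext y
    have hy := sum_sq X hsph y
    simp only [Finset.sum_apply, mono, Multiset.map_cons, Multiset.prod_cons]
    simp only [← mul_assoc]
    rw [← Finset.sum_mul, hy, one_mul]
  rw [key]
  refine Submodule.sum_mem _ (fun i _ => Submodule.subset_span ⟨i ::ₘ i ::ₘ μ, by simp, rfl⟩)

lemma span_MS_le (X : Finset (EuclideanSpace ℝ (Fin m))) (hsph : ∀ x ∈ X, ‖x‖ = 1) (k : ℕ) :
    Submodule.span ℝ (MS X k) ≤ Submodule.span ℝ (MS X (k + 2)) := by
  refine Submodule.span_le.2 ?_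
  rintro _ ⟨μ, hμ, rfl⟩
  simp only [Set.mem_setOf_eq] at hμ
  subst hμ
  exact mono_mem_up X hsph μ

lemma inner_mem (X : Finset (EuclideanSpace ℝ (Fin m))) (x : EuclideanSpace ℝ (Fin m)) :
    (fun y : ↥X => ⟪x, (y : EuclideanSpace ℝ (Fin m))⟫) ∈ Submodule.span ℝ (MS X 1) := by
  have key : (fun y : ↥X => ⟪x, (y : EuclideanSpace ℝ (Fin m))⟫)
      = ∑ i : Fin m, x i • mono X {i} := by
    funext y
    simp [mono, PiLp.inner_apply, RCLike.inner_apply, conj_trivial]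
    exact Finset.sum_congr rfl (fun i _ => mul_comm _ _)
  rw [key]
  exact Submodule.sum_mem _ (fun i _ =>
    Submodule.smul_mem _ _ (Submodule.subset_span ⟨{i}, by simp, rfl⟩))

lemma prod_mem (X : Finset (EuclideanSpace ℝ (Fin m))) (hsph : ∀ x ∈ X, ‖x‖ = 1)
    (x : EuclideanSpace ℝ (Fin m)) (cs : Multiset ℝ) :
    (fun y : ↥X => ((cs.map (fun c => ⟪x, (y : EuclideanSpace ℝ (Fin m))⟫ - c)).prod)) ∈
      Submodule.span ℝ (MS X (Multiset.card cs)) ⊔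
        Submodule.span ℝ (MS X (Multiset.card cs - 1)) := by
  induction cs using Multiset.induction with
  | empty =>
      apply le_sup_left (α := Submodule ℝ (↥X → ℝ))
      refine Submodule.subset_span ⟨0, by simp, ?_⟩
      funext y; simp [mono]
  | cons c s ih =>
      obtain ⟨f1, hf1, f2, hf2, hsum⟩ := Submodule.mem_sup.1 ih
      set n := Multiset.card s with hn
      have hcard : Multiset.card (c ::ₘ s) = n + 1 := by simp [hn]
      rw [hcard]
      have hkey : (fun y : ↥X => ((Multiset.map
            (fun c' => ⟪x, (y : EuclideanSpace ℝ (Fin m))⟫ - c') (c ::ₘ s)).prod))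
          = (fun y : ↥X => ⟪x, (y : EuclideanSpace ℝ (Fin m))⟫) * f1
            + (fun y : ↥X => ⟪x, (y : EuclideanSpace ℝ (Fin m))⟫) * f2
            - c • f1 - c • f2 := by
        funext y
        have h := congrFun hsum y
        simp only [Pi.add_apply] at h
        simp only [Multiset.map_cons, Multiset.prod_cons, Pi.sub_apply, Pi.add_apply,
          Pi.mul_apply, Pi.smul_apply, smul_eq_mul, ← h]
        ring
      rw [hkey]
      have hinner := inner_mem X x
      have m1 : (fun y : ↥X => ⟪x, (y : EuclideanSpace ℝ (Fin m))⟫) * f1 ∈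
          Submodule.span ℝ (MS X (n + 1)) := by
        have := mul_mem_span X hinner hf1
        rwa [Nat.add_comm] at this
      have m2 : c • f1 ∈ Submodule.span ℝ (MS X n) := Submodule.smul_mem _ _ hf1
      refine Submodule.sub_mem _ (Submodule.sub_mem _ (Submodule.add_mem _ ?_ ?_) ?_) ?_
      · exact le_sup_left (α := Submodule ℝ (↥X → ℝ)) m1
      · -- inner * f2
        have h2 := mul_mem_span X hinner hf2
        rcases n with _ | k
        · exact le_sup_left (α := Submodule ℝ (↥X → ℝ)) h2
        · have : 1 + (k + 1 - 1) = k + 1 := by omega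
          rw [this] at h2
          simpa using le_sup_right (α := Submodule ℝ (↥X → ℝ)) h2
      · simpa using le_sup_right (α := Submodule ℝ (↥X → ℝ)) m2
      · have h4 : c • f2 ∈ Submodule.span ℝ (MS X (n - 1)) := Submodule.smul_mem _ _ hf2
        rcases n with _ | k
        · simpa using le_sup_right (α := Submodule ℝ (↥X → ℝ)) h4
        · have h5 : c • f2 ∈ Submodule.span ℝ (MS X (k + 2)) := by
            exact span_MS_le X hsph k (by simpa using h4)
          exact le_sup_left (α := Submodule ℝ (↥X → ℝ)) h5
lemma range_sym (X : Finset (EuclideanSpace ℝ (Fin m))) (k : ℕ) :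
    Set.range (fun μ : Sym (Fin m) k => mono X μ.1) = MS X k := by
  ext f
  constructor
  · rintro ⟨⟨μ, hμ⟩, rfl⟩; exact ⟨μ, hμ, rfl⟩
  · rintro ⟨μ, hμ, rfl⟩; exact ⟨⟨μ, hμ⟩, rfl⟩

lemma card_bound (X : Finset (EuclideanSpace ℝ (Fin m))) (t : ℕ)
    (F : ↥X → (↥X → ℝ)) (hli : LinearIndependent ℝ F)
    (hF : ∀ x, F x ∈ Submodule.span ℝ (MS X t) ⊔ Submodule.span ℝ (MS X (t - 1))) :
    X.card ≤ Nat.multichoose m t + Nat.multichoose m (t - 1) := by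
  classical
  set fam : Sym (Fin m) t ⊕ Sym (Fin m) (t - 1) → (↥X → ℝ) :=
    Sum.elim (fun μ => mono X μ.1) (fun ν => mono X ν.1) with hfam
  have hrange : Set.range fam = MS X t ∪ MS X (t - 1) := by
    rw [hfam, Set.Sum.elim_range, range_sym, range_sym]
  set V : Submodule ℝ (↥X → ℝ) := Submodule.span ℝ (Set.range fam) with hV
  have hFV : ∀ x, F x ∈ V := by
    intro x
    rw [hV, hrange, Submodule.span_union]
    exact hF x
  have hfin : FiniteDimensional ℝ V := by
    apply FiniteDimensional.span_of_finite
    exact Set.finite_range fam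
  set F' : ↥X → V := fun x => ⟨F x, hFV x⟩ with hF'
  have hli' : LinearIndependent ℝ F' := by
    apply LinearIndependent.of_comp V.subtype
    exact hli
  have h1 : Fintype.card ↥X ≤ Module.finrank ℝ V := hli'.fintype_card_le_finrank
  have h2 : Module.finrank ℝ V ≤ Fintype.card (Sym (Fin m) t ⊕ Sym (Fin m) (t - 1)) :=
    finrank_range_le_card fam
  have h3 : Fintype.card (Sym (Fin m) t ⊕ Sym (Fin m) (t - 1))
      = Nat.multichoose m t + Nat.multichoose m (t - 1) := by
    rw [Fintype.card_sum, Sym.card_sym_eq_multichoose, Sym.card_sym_eq_multichoose,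
      Fintype.card_fin]
  rw [Fintype.card_coe] at h1
  omega
lemma inner_ne_one (X : Finset (EuclideanSpace ℝ (Fin m))) (hsph : ∀ x ∈ X, ‖x‖ = 1)
    {u v : EuclideanSpace ℝ (Fin m)} (hu : u ∈ X) (hv : v ∈ X) (huv : u ≠ v) :
    ⟪u, v⟫ ≠ 1 := by
  intro h
  have h2 : ‖u - v‖ ^ 2 = ‖u‖ ^ 2 - 2 * ⟪u, v⟫ + ‖v‖ ^ 2 := norm_sub_sq_real u v
  rw [h, hsph u hu, hsph v hv] at h2
  norm_num at h2
  exact huv (sub_eq_zero.1 h2)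

lemma inner_self_one (X : Finset (EuclideanSpace ℝ (Fin m))) (hsph : ∀ x ∈ X, ‖x‖ = 1)
    (x : ↥X) : ⟪(x : EuclideanSpace ℝ (Fin m)), (x : EuclideanSpace ℝ (Fin m))⟫ = 1 := by
  rw [real_inner_self_eq_norm_sq, hsph x.1 x.2]; norm_num

end Stmt10Aux

/-- Let `X ⊆ S^{m-1}` be a finite set with `|A(X)| ≤ d`.  If
`|X| > N(m, d-1) = C(m+d-2, d-1) + C(m+d-3, d-2)`, then `|A(X)| = d`: exactly `d` inner
products occur between distinct points of `X`. -/
theorem stmt_10 (m d : ℕ) (X : Finset (EuclideanSpace ℝ (Fin m)))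
    (hsph : ∀ x ∈ X, ‖x‖ = 1) (hcard : 2 ≤ X.card)
    (hncard : (innerSet m X).ncard ≤ d)
    (hbig : X.card > absBound m (d - 1)) :
    (innerSet m X).ncard = d := by
  classical
  open Stmt10Aux in
  rcases eq_or_lt_of_le hncard with h | h
  · exact h
  exfalso
  set A : Finset ℝ :=
    ((X ×ˢ X).filter (fun p => p.1 ≠ p.2)).image (fun p => ⟪p.1, p.2⟫) with hAdef
  have hA : innerSet m X = ↑A := by
    ext t
    simp only [innerSet, Set.mem_setOf_eq, hAdef, Finset.coe_image, Set.mem_image,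
      Finset.mem_coe, Finset.mem_filter, Finset.mem_product]
    constructor
    · rintro ⟨x, hx, y, hy, hxy, rfl⟩
      exact ⟨(x, y), ⟨⟨hx, hy⟩, hxy⟩, rfl⟩
    · rintro ⟨⟨x, y⟩, ⟨⟨hx, hy⟩, hxy⟩, rfl⟩
      exact ⟨x, hx, y, hy, hxy, rfl⟩
  have hs : (innerSet m X).ncard = A.card := by rw [hA, Set.ncard_coe_finset]
  set s := A.card with hsdef
  have hsd : s < d := by omega
  have hs1 : 1 ≤ s := by
    obtain ⟨a, ha, b, hb, hab⟩ := Finset.one_lt_card.mp hcard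
    have : ⟪a, b⟫ ∈ A := by
      rw [hAdef]
      exact Finset.mem_image.2 ⟨(a, b), Finset.mem_filter.2 ⟨Finset.mem_product.2 ⟨ha, hb⟩, hab⟩, rfl⟩
    exact Finset.card_pos.2 ⟨_, this⟩
  set t := d - 1 with htdef
  have hst : s ≤ t := by omega
  have ht1 : 1 ≤ t := by omega
  set cs : Multiset ℝ := Multiset.replicate (t - s) (0 : ℝ) + A.val with hcsdef
  have hcs : Multiset.card cs = t := by
    rw [hcsdef]
    simp only [Multiset.card_add, Multiset.card_replicate]
    have : Multiset.card A.val = s := rfl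
    omega
  set F : ↥X → (↥X → ℝ) := fun x y =>
    ((cs.map (fun c => ⟪(x : EuclideanSpace ℝ (Fin m)), (y : EuclideanSpace ℝ (Fin m))⟫ - c)).prod)
    with hFdef
  have hmemA : ∀ c ∈ A, c ≠ 1 := by
    intro c hc
    rw [hAdef] at hc
    obtain ⟨⟨u, v⟩, huv, rfl⟩ := Finset.mem_image.1 hc
    obtain ⟨huv', hne⟩ := Finset.mem_filter.1 huv
    obtain ⟨hu, hv⟩ := Finset.mem_product.1 huv'
    exact inner_ne_one X hsph hu hv hne
  have hdiag : ∀ x : ↥X, F x x ≠ 0 := by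
    intro x
    rw [hFdef]
    apply Multiset.prod_ne_zero
    intro h0
    obtain ⟨c, hc, hc0⟩ := Multiset.mem_map.1 h0
    rw [inner_self_one X hsph x] at hc0
    have hc1 : c = 1 := by linarith
    rw [hcsdef, Multiset.mem_add] at hc
    rcases hc with hc | hc
    · rw [Multiset.eq_of_mem_replicate hc] at hc1; norm_num at hc1
    · exact hmemA c hc hc1
  have hoff : ∀ x y : ↥X, x ≠ y → F x y = 0 := by
    intro x y hxy
    rw [hFdef]
    have hne : (x : EuclideanSpace ℝ (Fin m)) ≠ (y : EuclideanSpace ℝ (Fin m)) :=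
      fun h => hxy (Subtype.ext h)
    have hmem : ⟪(x : EuclideanSpace ℝ (Fin m)), (y : EuclideanSpace ℝ (Fin m))⟫ ∈ cs := by
      rw [hcsdef, Multiset.mem_add]
      right
      show _ ∈ A
      rw [hAdef]
      exact Finset.mem_image.2 ⟨(x.1, y.1),
        Finset.mem_filter.2 ⟨Finset.mem_product.2 ⟨x.2, y.2⟩, hne⟩, rfl⟩
    apply Multiset.prod_eq_zero
    exact Multiset.mem_map.2 ⟨_, hmem, sub_self _⟩
  have hli : LinearIndependent ℝ F := by
    rw [Fintype.linearIndependent_iff]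
    intro g hg y
    have h1 := congrFun hg y
    simp only [Finset.sum_apply, Pi.smul_apply, smul_eq_mul, Pi.zero_apply] at h1
    rw [Finset.sum_eq_single y (fun x _ hx => by rw [hoff x y hx, mul_zero]) (by simp)] at h1
    exact (mul_eq_zero.1 h1).resolve_right (hdiag y)
  have hmem : ∀ x : ↥X, F x ∈ Submodule.span ℝ (MS X t) ⊔ Submodule.span ℝ (MS X (t - 1)) := by
    intro x
    have := prod_mem X hsph (x : EuclideanSpace ℝ (Fin m)) cs
    rwa [hcs] at this
  have hbound := card_bound X t F hli hmem
  rw [Nat.multichoose_eq, Nat.multichoose_eq] at hbound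
  have habs : absBound m t = (m + t - 1).choose t + (m + t - 2).choose (t - 1) := by
    rw [absBound, if_neg (by omega)]
  have harith : m + (t - 1) - 1 = m + t - 2 := by omega
  rw [harith] at hbound
  omega
end

section
/- Let X be a finite subset of the unit sphere S^{m-1} ⊂ ℝ^m with |A(X)| ≤ d and |X| > N(m,d-1) = C(m+d-2, d-1) + C(m+d-3, d-2). Then |A(X)| = d; write A(X) = {θ*_1, ..., θ*_d} with θ*_1 > ... > θ*_d and set θ*_0 = 1. For each i ∈ {1,...,d}, the number -K*_i is an eigenvalue of the adjacency matrix A_i of the graph (X, R_i), with multiplicity (dimension of the kernel of A_i + K*_i·I) at least |X| - N(m,d-1) > 0, where K*_i = ∏_{j∈{1,...,d}, j≠i} (θ*_0 - θ*_j)/(θ*_i - θ*_j). -/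
open scoped RealInnerProductSpace

attribute [local instance] Classical.propDecidable

section aux
variable {m : ℕ} (X : Finset (EuclideanSpace ℝ (Fin m)))

noncomputable def monoFun (k : ℕ) (s : Sym (Fin m) k) : X → ℝ :=
  fun y => ((s : Multiset (Fin m)).map (fun a => (y : EuclideanSpace ℝ (Fin m)) a)).prod

noncomputable def Wsp (k : ℕ) : Submodule ℝ (X → ℝ) :=
  Submodule.span ℝ (Set.range (monoFun X k))

noncomputable def coordMul (a : Fin m) : (X → ℝ) →ₗ[ℝ] (X → ℝ) where
  toFun f := fun y => (y : EuclideanSpace ℝ (Fin m)) a * f y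
  map_add' f g := by funext y; simp [mul_add]
  map_smul' c f := by funext y; simp [smul_eq_mul]; ring

lemma coordMul_mono (a : Fin m) {k : ℕ} (s : Sym (Fin m) k) :
    coordMul X a (monoFun X k s) = monoFun X (k + 1) (a ::ₛ s) := by
  funext y
  simp [coordMul, monoFun, Sym.coe_cons, Multiset.map_cons, Multiset.prod_cons]

lemma coordMul_mem (a : Fin m) {k : ℕ} {f : X → ℝ} (hf : f ∈ Wsp X k) :
    coordMul X a f ∈ Wsp X (k + 1) := by
  induction hf using Submodule.span_induction with
  | mem g hg =>
    obtain ⟨s, rfl⟩ := hg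
    rw [coordMul_mono]
    exact Submodule.subset_span ⟨_, rfl⟩
  | zero => simp
  | add f g _ _ hf hg => rw [map_add]; exact add_mem hf hg
  | smul c f _ hf => rw [map_smul]; exact Submodule.smul_mem _ _ hf

lemma inner_pow_mem (x : EuclideanSpace ℝ (Fin m)) (k : ℕ) :
    (fun y : X => ⟪x, (y : EuclideanSpace ℝ (Fin m))⟫ ^ k) ∈ Wsp X k := by
  induction k with
  | zero =>
    have : (fun y : X => ⟪x, (y : EuclideanSpace ℝ (Fin m))⟫ ^ 0)
        = monoFun X 0 (Sym.nil) := by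
      funext y; simp [monoFun, Sym.nil]
    rw [this]
    exact Submodule.subset_span ⟨_, rfl⟩
  | succ k ih =>
    have hexp : (fun y : X => ⟪x, (y : EuclideanSpace ℝ (Fin m))⟫ ^ (k + 1))
        = ∑ a : Fin m, x a • coordMul X a
            (fun y : X => ⟪x, (y : EuclideanSpace ℝ (Fin m))⟫ ^ k) := by
      funext y
      simp only [Finset.sum_apply, Pi.smul_apply, smul_eq_mul, coordMul,
        LinearMap.coe_mk, AddHom.coe_mk]
      rw [pow_succ, mul_comm]
      rw [PiLp.inner_apply]
      simp only [RCLike.inner_apply, conj_trivial]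
      rw [Finset.sum_mul]
      congr 1
      funext a
      ring
    rw [hexp]
    exact Submodule.sum_mem _ fun a _ =>
      Submodule.smul_mem _ _ (coordMul_mem X a ih)

lemma sum_sq_coords {y : EuclideanSpace ℝ (Fin m)} (hy : ‖y‖ = 1) :
    ∑ a : Fin m, y a * y a = 1 := by
  have h := real_inner_self_eq_norm_sq y
  rw [PiLp.inner_apply] at h
  simp only [RCLike.inner_apply, conj_trivial] at h
  rw [h, hy]; norm_num

lemma Wsp_le_step (hsph : ∀ x ∈ X, ‖x‖ = 1) (k : ℕ) :
    Wsp X k ≤ Wsp X (k + 2) := by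
  rw [Wsp, Submodule.span_le]
  rintro _ ⟨s, rfl⟩
  have : monoFun X k s = ∑ a : Fin m, monoFun X (k + 2) (a ::ₛ a ::ₛ s) := by
    funext y
    simp only [Finset.sum_apply, monoFun, Sym.coe_cons, Multiset.map_cons, Multiset.prod_cons,
      ← mul_assoc]
    rw [← Finset.sum_mul, sum_sq_coords (hsph y y.2), one_mul]
  rw [this]
  exact Submodule.sum_mem _ fun a _ => Submodule.subset_span ⟨_, rfl⟩

lemma Wsp_le_sup (hsph : ∀ x ∈ X, ‖x‖ = 1) :
    ∀ (n k : ℕ), Wsp X k ≤ Wsp X (k + n) ⊔ Wsp X (k + n - 1)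
  | 0, k => by simp
  | 1, k => by simp
  | (n + 2), k => by
    refine (Wsp_le_step X hsph k).trans ?_
    have h := Wsp_le_sup hsph n (k + 2)
    have e1 : k + 2 + n = k + (n + 2) := by omega
    rwa [e1] at h

lemma Wsp_mem_sup (hsph : ∀ x ∈ X, ‖x‖ = 1) {e k : ℕ} (hk : k ≤ e) :
    Wsp X k ≤ Wsp X e ⊔ Wsp X (e - 1) := by
  have h := Wsp_le_sup X hsph (e - k) k
  have e1 : k + (e - k) = e := by omega
  rwa [e1] at h

lemma finrank_W_sup_le (e : ℕ) :
    Module.finrank ℝ (Wsp X e ⊔ Wsp X (e - 1) : Submodule ℝ (X → ℝ)) ≤ absBound m e := by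
  rw [absBound]
  rcases Nat.eq_zero_or_pos e with he | he
  · subst he
    simp only [Nat.zero_sub, if_pos rfl, add_zero, Nat.choose_zero_right]
    rw [sup_idem, Wsp]
    have h := finrank_range_le_card (R := ℝ) (monoFun X 0)
    rw [Set.finrank] at h
    refine h.trans ?_
    rw [Sym.card_sym_eq_multichoose]
    simp [Nat.multichoose]
  · rw [if_neg (by omega)]
    have hspan : (Wsp X e ⊔ Wsp X (e - 1) : Submodule ℝ (X → ℝ))
        = Submodule.span ℝ (Set.range (Sum.elim (monoFun X e) (monoFun X (e - 1)))) := by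
      rw [Set.Sum.elim_range, Submodule.span_union]; rfl
    rw [hspan]
    have h := finrank_range_le_card (R := ℝ) (Sum.elim (monoFun X e) (monoFun X (e - 1)))
    rw [Set.finrank] at h
    refine h.trans ?_
    rw [Fintype.card_sum, Sym.card_sym_eq_multichoose, Sym.card_sym_eq_multichoose,
      Nat.multichoose_eq, Nat.multichoose_eq, Fintype.card_fin]
    have : m + (e - 1) - 1 = m + e - 2 := by omega
    rw [this]

end aux

/-- Let `X ⊆ S^{m-1}` be a finite set with `|A(X)| ≤ d` and
`|X| > N(m, d-1) = C(m+d-2, d-1) + C(m+d-3, d-2)`.  Then `|A(X)| = d`; writing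
`A(X) = {θ 1, …, θ d}` with `θ 1 > ⋯ > θ d` and `θ 0 = 1`, for each `i ∈ {1, …, d}` the
number `-K i` is an eigenvalue of the adjacency matrix `A_i` of the graph `(X, R_i)`,
with multiplicity (the dimension of the kernel of `A_i + K i • I`) at least
`|X| - N(m, d-1) > 0`, where `K i = ∏_{j ∈ {1,…,d}, j ≠ i} (θ 0 - θ j) / (θ i - θ j)`. -/


theorem stmt_11 (m d : ℕ) (X : Finset (EuclideanSpace ℝ (Fin m)))
    (hsph : ∀ x ∈ X, ‖x‖ = 1) (hcard : 2 ≤ X.card)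
    (hncard : (innerSet m X).ncard ≤ d)
    (hbig : X.card > absBound m (d - 1))
    (θ : Fin (d + 1) → ℝ) (hθ : StrictAnti θ) (hθ0 : θ 0 = 1)
    (hrange : innerSet m X = {t | ∃ i : Fin (d + 1), i ≠ 0 ∧ θ i = t}) :
    (innerSet m X).ncard = d ∧
    ∀ i : Fin (d + 1), i ≠ 0 →
      (∃ v : X → ℝ, v ≠ 0 ∧
        (relAdjMatrix m X (θ i)).mulVec v =
          (-(∏ j ∈ Finset.univ.filter (fun j : Fin (d + 1) => j ≠ 0 ∧ j ≠ i),
              (θ 0 - θ j) / (θ i - θ j))) • v) ∧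
      0 < (X.card : ℤ) - (absBound m (d - 1) : ℤ) ∧
      (X.card : ℤ) - (absBound m (d - 1) : ℤ) ≤
        (Module.finrank ℝ
          (LinearMap.ker
            (Matrix.mulVecLin
              (relAdjMatrix m X (θ i) +
                (∏ j ∈ Finset.univ.filter (fun j : Fin (d + 1) => j ≠ 0 ∧ j ≠ i),
                  (θ 0 - θ j) / (θ i - θ j)) • (1 : Matrix X X ℝ)))) : ℤ) := by
  have hθinj : Function.Injective θ := hθ.injective
  constructor
  · -- ncard part
    have himg : innerSet m X = θ '' {i : Fin (d + 1) | i ≠ 0} := by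
      rw [hrange]; ext t
      simp [Set.mem_image, eq_comm, and_comm]
    rw [himg, Set.ncard_image_of_injective _ hθinj]
    have : {i : Fin (d + 1) | i ≠ 0} = ((Finset.univ.erase 0 : Finset (Fin (d + 1))) : Set _) := by
      ext i; simp
    rw [this, Set.ncard_coe_finset, Finset.card_erase_of_mem (Finset.mem_univ _),
      Finset.card_univ, Fintype.card_fin]
    omega
  · intro i hi
    have hd1 : 1 ≤ d := by
      rcases Nat.eq_zero_or_pos d with h | h
      · subst h; exact absurd (Fin.eq_zero i) hi
      · exact h
    set e := d - 1 with he
    set F := Finset.univ.filter (fun j : Fin (d + 1) => j ≠ 0 ∧ j ≠ i) with hF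
    set c := ∏ j ∈ F, (θ 0 - θ j) / (θ i - θ j) with hc
    set M := relAdjMatrix m X (θ i) + c • (1 : Matrix X X ℝ) with hM
    -- card of F
    have hFcard : F.card = e := by
      have : F = ({0, i} : Finset (Fin (d + 1)))ᶜ := by
        ext j; simp [hF, not_or]
      rw [this, Finset.card_compl, Fintype.card_fin,
        Finset.card_insert_of_notMem (by simpa using (Ne.symm hi)), Finset.card_singleton]
      omega
    -- entries of M
    have hentry : ∀ x y : X, M x y
        = ∏ j ∈ F, (⟪(x : EuclideanSpace ℝ (Fin m)), (y : EuclideanSpace ℝ (Fin m))⟫ - θ j)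
            / (θ i - θ j) := by
      intro x y
      have hM' : M x y = (if ⟪(x : EuclideanSpace ℝ (Fin m)),
          (y : EuclideanSpace ℝ (Fin m))⟫ = θ i then 1 else 0)
          + c * (if x = y then 1 else 0) := by
        simp [hM, relAdjMatrix, Matrix.add_apply, Matrix.smul_apply, Matrix.one_apply,
          smul_eq_mul]
      by_cases hxy : x = y
      · subst hxy
        have hxx : ⟪(x : EuclideanSpace ℝ (Fin m)), (x : EuclideanSpace ℝ (Fin m))⟫ = 1 := by
          rw [real_inner_self_eq_norm_sq, hsph x x.2]; norm_num
        have hne : θ i ≠ 1 := by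
          rw [← hθ0]; exact fun h => hi (hθinj h)
        rw [hM', hxx, if_neg (fun h => hne h.symm), if_pos rfl, mul_one, zero_add, hc]
        exact (Finset.prod_congr rfl fun j _ => by rw [hθ0]).symm
      · have hne : (x : EuclideanSpace ℝ (Fin m)) ≠ (y : EuclideanSpace ℝ (Fin m)) :=
          fun h => hxy (Subtype.ext h)
        have hmem : ⟪(x : EuclideanSpace ℝ (Fin m)), (y : EuclideanSpace ℝ (Fin m))⟫
            ∈ innerSet m X := ⟨x, x.2, y, y.2, hne, rfl⟩
        rw [hrange] at hmem
        obtain ⟨j, hj0, hjv⟩ := hmem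
        by_cases hji : j = i
        · subst hji
          rw [hM', if_pos hjv.symm, if_neg hxy, mul_zero, add_zero, ← hjv]
          refine Eq.symm (Finset.prod_eq_one fun l hl => ?_)
          simp only [hF, Finset.mem_filter] at hl
          exact div_self (sub_ne_zero.2 fun h => hl.2.2 (hθinj h).symm)
        · have : ⟪(x : EuclideanSpace ℝ (Fin m)), (y : EuclideanSpace ℝ (Fin m))⟫ ≠ θ i := by
            rw [← hjv]; exact fun h => hji (hθinj h)
          rw [hM', if_neg this, if_neg hxy, mul_zero, add_zero]
          refine (Finset.prod_eq_zero (i := j) ?_ ?_).symm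
          · simp [hF, hj0, hji]
          · rw [← hjv, sub_self, zero_div]
      -- end entries
    -- the polynomial
    set P : Polynomial ℝ :=
      ∏ j ∈ F, (Polynomial.C (θ i - θ j)⁻¹ * (Polynomial.X - Polynomial.C (θ j))) with hP
    have hPdeg : P.natDegree ≤ e := by
      refine (Polynomial.natDegree_prod_le _ _).trans ?_
      have h1 : ∀ j ∈ F,
          (Polynomial.C (θ i - θ j)⁻¹ * (Polynomial.X - Polynomial.C (θ j))).natDegree ≤ 1 := by
        intro j _
        refine (Polynomial.natDegree_mul_le).trans ?_
        simp [Polynomial.natDegree_X_sub_C]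
      refine (Finset.sum_le_sum h1).trans ?_
      rw [Finset.sum_const, smul_eq_mul, mul_one, hFcard]
    have hPeval : ∀ t : ℝ, P.eval t = ∏ j ∈ F, (t - θ j) / (θ i - θ j) := by
      intro t
      rw [hP, Polynomial.eval_prod]
      refine Finset.prod_congr rfl fun j _ => ?_
      simp [div_eq_inv_mul]
    -- rows belong to V
    set V := (Wsp X e ⊔ Wsp X (e - 1) : Submodule ℝ (X → ℝ)) with hV
    have hrow : ∀ x : X, (fun y : X => M x y) ∈ V := by
      intro x
      have h1 : (fun y : X => M x y)
          = ∑ k ∈ Finset.range (e + 1), P.coeff k •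
              (fun y : X => ⟪(x : EuclideanSpace ℝ (Fin m)),
                (y : EuclideanSpace ℝ (Fin m))⟫ ^ k) := by
        funext y
        rw [hentry x y, ← hPeval, Polynomial.eval_eq_sum_range' (Nat.lt_succ_of_le hPdeg)]
        simp [mul_comm]
      rw [h1]
      refine Submodule.sum_mem _ fun k hk => Submodule.smul_mem _ _ ?_
      exact Wsp_mem_sup X hsph (Nat.lt_succ_iff.mp (Finset.mem_range.mp hk))
        (inner_pow_mem X _ k)
    -- range bound
    have hrange' : LinearMap.range (Matrix.mulVecLin M) ≤ V := by
      rw [Matrix.range_mulVecLin, Submodule.span_le]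
      rintro _ ⟨x, rfl⟩
      have : M.transpose x = fun y : X => M x y := by
        funext y
        rw [Matrix.transpose_apply, hentry y x, hentry x y]
        exact Finset.prod_congr rfl fun j _ => by rw [real_inner_comm]
      rw [show M.col x = M.transpose x from rfl, this]
      exact hrow x
    have hrk : Module.finrank ℝ (LinearMap.range (Matrix.mulVecLin M)) ≤ absBound m e :=
      (Submodule.finrank_mono hrange').trans (finrank_W_sup_le X e)
    have hrn : Module.finrank ℝ (LinearMap.range (Matrix.mulVecLin M))
        + Module.finrank ℝ (LinearMap.ker (Matrix.mulVecLin M)) = X.card := by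
      rw [LinearMap.finrank_range_add_finrank_ker, Module.finrank_fintype_fun_eq_card,
        Fintype.card_coe]
    have hkerrank : (X.card : ℤ) - (absBound m e : ℤ)
        ≤ (Module.finrank ℝ (LinearMap.ker (Matrix.mulVecLin M)) : ℤ) := by
      omega
    have hpos : 0 < (X.card : ℤ) - (absBound m e : ℤ) := by
      have := hbig; omega
    -- eigenvector
    have hkerpos : 0 < Module.finrank ℝ (LinearMap.ker (Matrix.mulVecLin M)) := by omega
    have hker_ne : LinearMap.ker (Matrix.mulVecLin M) ≠ ⊥ := by
      intro h
      rw [h, finrank_bot] at hkerpos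
      exact lt_irrefl 0 hkerpos
    obtain ⟨v, hvmem, hvne⟩ := Submodule.ne_bot_iff _ |>.mp hker_ne
    refine ⟨⟨v, hvne, ?_⟩, hpos, hkerrank⟩
    have hv0 : M.mulVec v = 0 := hvmem
    rw [hM, Matrix.add_mulVec, Matrix.smul_mulVec, Matrix.one_mulVec] at hv0
    have : (relAdjMatrix m X (θ i)).mulVec v = -(c • v) :=
      eq_neg_of_add_eq_zero_left hv0
    rw [this, ← neg_smul]
end
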